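/- arXiv:2106.03354 — 5 statements merged into one kernel-verified Lean document; each statement's English description precedes it below -/
import Mathlib

section
/- Let d ≥ 1 and let ρ be a probability density on ℝ^d with finite variance. Fix x in the interior of the support of ρ (so ρ(x) > 0), assume ρ is continuous at x, and let X_0,…,X_n be i.i.d. with density ρ (n ≥ 1). Then for every real β ≤ −1, the moment E[w_0(x)^β] of the Hilbert kernel weight w_0(x) = ‖x−X_0‖^{−d} / Σ_{j=0}^n ‖x−X_j‖^{−d} is infinite. -/
open MeasureTheory Filter

noncomputable section

/-- Euclidean space `ℝ^d`. -/
abbrev Euc (d : ℕ) : Type := EuclideanSpace ℝ (Fin d)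

/-- The Hilbert kernel weight `w_i(x) = ‖x−x_i‖^{−d} / Σ_j ‖x−x_j‖^{−d}`
for sample points `xs : Fin (n+1) → ℝ^d`. -/
def hilbertWeight (d n : ℕ) (x : Euc d) (xs : Fin (n + 1) → Euc d) (i : Fin (n + 1)) : ℝ :=
  ‖x - xs i‖ ^ (-(d : ℝ)) / ∑ j : Fin (n + 1), ‖x - xs j‖ ^ (-(d : ℝ))

/-- The volume `V_d = π^{d/2}/Γ(d/2+1)` of the unit ball in `ℝ^d`. -/
def unitBallVol (d : ℕ) : ℝ := Real.pi ^ ((d : ℝ) / 2) / Real.Gamma ((d : ℝ) / 2 + 1)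

namespace HilbertAux

open ENNReal Metric

lemma fin_zero_ne_one (m : ℕ) : (0 : Fin (m + 2)) ≠ 1 := by
  simp [Fin.ext_iff]

lemma prod_split {M : Type*} [CommMonoid M] {m : ℕ} (h : Fin (m + 2) → M)
    (h1 : ∀ i, i ≠ 0 → i ≠ 1 → h i = 1) : ∏ i, h i = h 0 * h 1 := by
  rw [← Finset.prod_subset (Finset.subset_univ ({0, 1} : Finset (Fin (m + 2))))
      (fun i _ hi => h1 i (fun h' => hi (by simp [h'])) (fun h' => hi (by simp [h'])))]
  rw [Finset.prod_insert (by simp [fin_zero_ne_one m]), Finset.prod_singleton]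

lemma lintegral_pi_prod {α : Type*} [MeasureSpace α] [SigmaFinite (volume : Measure α)] :
    ∀ (m : ℕ) (f : Fin m → α → ℝ≥0∞), (∀ i, Measurable (f i)) →
      ∫⁻ xs : Fin m → α, ∏ i, f i (xs i) = ∏ i, ∫⁻ y, f i y := by
  intro m
  induction m with
  | zero =>
      intro f _
      simp [lintegral_const, volume_pi, Measure.pi_univ]
  | succ m ih =>
      intro f hf
      have hmeas : Measurable fun xs : Fin (m + 1) → α => ∏ i, f i (xs i) :=
        Finset.measurable_prod _ fun i _ => (hf i).comp (measurable_pi_apply i)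
      have mp := (measurePreserving_piFinSuccAbove (fun _ : Fin (m + 1) => (volume : Measure α))
        0).symm
      rw [volume_pi, ← mp.lintegral_comp hmeas]
      simp only [MeasurableEquiv.piFinSuccAbove_symm_apply, Fin.insertNthEquiv,
        Fin.insertNth_zero, Equiv.coe_fn_mk, Fin.prod_univ_succ, Fin.zero_succAbove, cast_eq,
        Function.comp_def, Fin.cons_zero, Fin.cons_succ]
      rw [lintegral_prod_mul (f := f 0) (g := fun ys : Fin m → α => ∏ j, f j.succ (ys j))
        (hf 0).aemeasurable
        (Finset.measurable_prod Finset.univ fun j _ =>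
          (hf j.succ).comp (measurable_pi_apply j)).aemeasurable]
      rw [show (Measure.pi fun _ : Fin m => (volume : Measure α)) = volume from volume_pi.symm]
      rw [ih _ fun j => hf j.succ]

lemma lintegral_ball_top (d : ℕ) (hd : 1 ≤ d) (x : Euc d) {ε : ℝ} (hε : 0 < ε) :
    ∫⁻ y in Metric.ball x ε, ENNReal.ofReal (‖x - y‖ ^ (-(d : ℝ))) = ⊤ := by
  have hnt : Nontrivial (Euc d) := by
    refine ⟨EuclideanSpace.single (⟨0, by omega⟩ : Fin d) (1 : ℝ), 0, fun h => ?_⟩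
    have h2 := congrArg (fun v : Euc d => ‖v‖) h
    simp [EuclideanSpace.norm_single] at h2
  set V := volume (Metric.ball (0 : Euc d) 1) with hV
  have hV0 : V ≠ 0 := (measure_ball_pos _ _ one_pos).ne'
  have hVt : V ≠ ⊤ := measure_ball_lt_top.ne
  set r : ℕ → ℝ := fun k => ε / 2 ^ k with hr_def
  have hrpos : ∀ k, 0 < r k := fun k => div_pos hε (by positivity)
  have hrsucc : ∀ k, r (k + 1) = r k / 2 := fun k => by
    simp only [hr_def, pow_succ, div_div]
  have hrlt : ∀ k, r (k + 1) < r k := fun k => by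
    rw [hrsucc]; linarith [hrpos k]
  have hrle : ∀ k, r k ≤ ε := fun k => by
    apply div_le_self hε.le
    exact one_le_pow₀ (by norm_num)
  have hrant : ∀ {k l : ℕ}, k ≤ l → r l ≤ r k := by
    intro k l h
    exact div_le_div_of_nonneg_left hε.le (by positivity) (pow_le_pow_right₀ (by norm_num) h)
  set S : ℕ → Set (Euc d) := fun k => Metric.ball x (r k) \ Metric.closedBall x (r (k + 1))
    with hS
  have hSmeas : ∀ k, MeasurableSet (S k) := fun k =>
    measurableSet_ball.diff measurableSet_closedBall
  have hSsub : ∀ k, S k ⊆ Metric.ball x ε := fun k y hy =>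
    Metric.ball_subset_ball (hrle k) hy.1
  have hdisj : Pairwise (Function.onFun Disjoint S) := by
    have key : ∀ {k l : ℕ}, k < l → Disjoint (S k) (S l) := by
      intro k l hkl
      refine Set.disjoint_left.2 fun y hyk hyl => hyk.2 ?_
      exact Metric.closedBall_subset_closedBall (hrant hkl) (Metric.ball_subset_closedBall hyl.1)
    intro k l hkl
    rcases hkl.lt_or_gt with h | h
    · exact key h
    · exact (key h).symm
  have hball : ∀ s : ℝ, 0 ≤ s →
      volume (Metric.ball x s) = ENNReal.ofReal (s ^ d) * V := by
    intro s hs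
    rw [hV, Measure.addHaar_ball volume x hs, finrank_euclideanSpace_fin]
  have hcball : ∀ s : ℝ, 0 ≤ s →
      volume (Metric.closedBall x s) = ENNReal.ofReal (s ^ d) * V := by
    intro s hs
    rw [hV, Measure.addHaar_closedBall volume x hs, finrank_euclideanSpace_fin]
  have hvol : ∀ k, volume (S k) = ENNReal.ofReal (r k ^ d - r (k + 1) ^ d) * V := by
    intro k
    rw [hS]
    rw [measure_diff (Metric.closedBall_subset_ball (hrlt k))
        measurableSet_closedBall.nullMeasurableSet measure_closedBall_lt_top.ne,
      hball _ (hrpos k).le, hcball _ (hrpos (k + 1)).le,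
      ← ENNReal.sub_mul fun _ _ => hVt,
      ← ENNReal.ofReal_sub _ (pow_nonneg (hrpos (k + 1)).le _)]
  have hd0 : (d : ℝ) ≠ 0 := Nat.cast_ne_zero.2 (by omega)
  set c : ℝ≥0∞ := ENNReal.ofReal (1 - (2⁻¹ : ℝ) ^ d) * V with hc
  have hc0 : c ≠ 0 := by
    have h2 : (2⁻¹ : ℝ) ^ d < 1 := pow_lt_one₀ (by norm_num) (by norm_num) (by omega)
    exact mul_ne_zero ((ENNReal.ofReal_pos.2 (by linarith)).ne') hV0
  have hshell : ∀ k, c ≤ ∫⁻ y in S k, ENNReal.ofReal (‖x - y‖ ^ (-(d : ℝ))) := by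
    intro k
    have hmeasf : Measurable fun y : Euc d => ENNReal.ofReal (‖x - y‖ ^ (-(d : ℝ))) := by
      have heq : (fun y : Euc d => ‖x - y‖ ^ (-(d : ℝ)))
          = fun y => (‖x - y‖ ^ d)⁻¹ := by
        funext y
        rw [Real.rpow_neg (norm_nonneg _), Real.rpow_natCast]
      exact ENNReal.measurable_ofReal.comp
        (heq ▸ ((measurable_const.sub measurable_id).norm.pow_const d).inv)
    have hck : c = ENNReal.ofReal (r k ^ (-(d : ℝ))) * volume (S k) := by
      have hr1 : r k ^ (-(d : ℝ)) * r k ^ d = 1 := by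
        rw [← Real.rpow_natCast (r k) d, ← Real.rpow_add (hrpos k)]
        simp
      have hreal : r k ^ (-(d : ℝ)) * (r k ^ d - r (k + 1) ^ d) = 1 - (2⁻¹ : ℝ) ^ d := by
        rw [hrsucc k, div_eq_mul_inv (r k) 2, mul_pow, mul_sub, hr1, ← mul_assoc, hr1, one_mul]
      rw [hvol k, ← mul_assoc, ← ENNReal.ofReal_mul (Real.rpow_nonneg (hrpos k).le _), hreal, hc]
    rw [hck]
    calc ENNReal.ofReal (r k ^ (-(d : ℝ))) * volume (S k)
        = ∫⁻ _ in S k, ENNReal.ofReal (r k ^ (-(d : ℝ))) := (setLIntegral_const _ _).symm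
      _ ≤ ∫⁻ y in S k, ENNReal.ofReal (‖x - y‖ ^ (-(d : ℝ))) := by
          refine setLIntegral_mono hmeasf fun y hy => ENNReal.ofReal_le_ofReal ?_
          have h1 : r (k + 1) < ‖x - y‖ := by
            have h2 : ¬ dist y x ≤ r (k + 1) := hy.2
            push_neg at h2
            rwa [dist_comm, dist_eq_norm] at h2
          have h2 : ‖x - y‖ ≤ r k := by
            have := hy.1
            rw [Metric.mem_ball, dist_comm, dist_eq_norm] at this
            exact this.le
          exact Real.rpow_le_rpow_of_nonpos (lt_trans (hrpos (k + 1)) h1) h2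
            (neg_nonpos.2 (Nat.cast_nonneg d))
  refine top_le_iff.1 ?_
  calc (⊤ : ℝ≥0∞) = ∑' _ : ℕ, c := (ENNReal.tsum_const_eq_top_of_ne_zero hc0).symm
    _ ≤ ∑' k, ∫⁻ y in S k, ENNReal.ofReal (‖x - y‖ ^ (-(d : ℝ))) :=
        ENNReal.tsum_le_tsum hshell
    _ = ∫⁻ y in ⋃ k, S k, ENNReal.ofReal (‖x - y‖ ^ (-(d : ℝ))) :=
        (lintegral_iUnion hSmeas hdisj _).symm
    _ ≤ ∫⁻ y in Metric.ball x ε, ENNReal.ofReal (‖x - y‖ ^ (-(d : ℝ))) :=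
        lintegral_mono' (Measure.restrict_mono (Set.iUnion_subset hSsub) le_rfl) le_rfl

lemma key_ineq (d : ℕ) (hd : 1 ≤ d) {m : ℕ} (x : Euc d) (xs : Fin (m + 2) → Euc d)
    {β : ℝ} (hβ : β ≤ -1) :
    ‖x - xs 0‖ ^ (d : ℝ) * ‖x - xs 1‖ ^ (-(d : ℝ)) ≤ hilbertWeight d (m + 1) x xs 0 ^ β := by
  have hd0 : (d : ℝ) ≠ 0 := Nat.cast_ne_zero.2 (by omega)
  have hw_nonneg : 0 ≤ hilbertWeight d (m + 1) x xs 0 ^ β := by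
    apply Real.rpow_nonneg
    unfold hilbertWeight
    positivity
  by_cases h0 : ‖x - xs 0‖ = 0
  · rw [h0, Real.zero_rpow hd0, zero_mul]; exact hw_nonneg
  by_cases h1 : ‖x - xs 1‖ = 0
  · rw [h1, Real.zero_rpow (by simpa using hd0), mul_zero]; exact hw_nonneg
  have hx0 : 0 < ‖x - xs 0‖ := lt_of_le_of_ne (norm_nonneg _) (Ne.symm h0)
  have hx1 : 0 < ‖x - xs 1‖ := lt_of_le_of_ne (norm_nonneg _) (Ne.symm h1)
  set a : Fin (m + 2) → ℝ := fun j => ‖x - xs j‖ ^ (-(d : ℝ)) with ha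
  have ha0 : 0 < a 0 := Real.rpow_pos_of_pos hx0 _
  have ha1 : 0 < a 1 := Real.rpow_pos_of_pos hx1 _
  have hanonneg : ∀ j, 0 ≤ a j := fun j => Real.rpow_nonneg (norm_nonneg _) _
  set T := ∑ j, a j with hT
  have h0T : a 0 ≤ T := Finset.single_le_sum (fun j _ => hanonneg j) (Finset.mem_univ 0)
  have h1T : a 1 ≤ T := Finset.single_le_sum (fun j _ => hanonneg j) (Finset.mem_univ 1)
  have hTpos : 0 < T := lt_of_lt_of_le ha0 h0T
  have hw : hilbertWeight d (m + 1) x xs 0 = a 0 / T := rfl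
  rw [hw]
  have hwpos : 0 < a 0 / T := div_pos ha0 hTpos
  have hwle : a 0 / T ≤ 1 := (div_le_one hTpos).2 h0T
  have hinv : (a 0)⁻¹ = ‖x - xs 0‖ ^ (d : ℝ) := by
    rw [ha]
    simp only
    rw [Real.rpow_neg (norm_nonneg _), inv_inv]
  have hLHS : ‖x - xs 0‖ ^ (d : ℝ) * ‖x - xs 1‖ ^ (-(d : ℝ)) = a 1 / a 0 := by
    rw [div_eq_mul_inv, hinv, mul_comm]
  rw [hLHS]
  calc a 1 / a 0 ≤ T / a 0 := (div_le_div_iff_of_pos_right ha0).2 h1T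
    _ = (a 0 / T) ^ (-1 : ℝ) := by rw [Real.rpow_neg_one, inv_div]
    _ ≤ (a 0 / T) ^ β := Real.rpow_le_rpow_of_exponent_ge hwpos hwle hβ

end HilbertAux

open HilbertAux ENNReal in
/-- for a probability density `ρ` on `ℝ^d` with finite variance, `x` in the
interior of the support of `ρ`, `ρ` continuous at `x`, `n ≥ 1` i.i.d. samples (plus `X_0`),
and any `β ≤ −1`, the β-th moment of the Hilbert kernel weight `w_0(x)` is infinite
(as a Lebesgue integral of the nonnegative integrand `w_0(x)^β·∏ ρ(x_i)`). -/
theorem hilbert_moment_infinite_beta_le_neg_one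
    (d : ℕ) (hd : 1 ≤ d)
    (ρ : Euc d → ℝ) (hρ_meas : Measurable ρ) (hρ_nonneg : ∀ y, 0 ≤ ρ y)
    (hρ_prob : (∫ y, ρ y) = 1)
    (hρ_var : Integrable (fun y => ρ y * ‖y‖ ^ 2))
    (x : Euc d) (hx : x ∈ interior {y | 0 < ρ y}) (hρ_cont : ContinuousAt ρ x)
    (n : ℕ) (hn : 1 ≤ n) (β : ℝ) (hβ : β ≤ -1) :
    ∫⁻ xs : Fin (n + 1) → Euc d,
        ENNReal.ofReal (hilbertWeight d n x xs 0 ^ β * ∏ i : Fin (n + 1), ρ (xs i)) = ⊤ := by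
  obtain ⟨m, rfl⟩ : ∃ m, n = m + 1 := ⟨n - 1, (Nat.succ_pred_eq_of_pos hn).symm⟩
  have hρx : 0 < ρ x := by have h := interior_subset hx; exact h
  obtain ⟨ε, hε, hballρ⟩ : ∃ ε > 0, ∀ y ∈ Metric.ball x ε, ρ x / 2 < ρ y := by
    have h := hρ_cont.eventually (eventually_gt_nhds (half_lt_self hρx))
    rcases Metric.mem_nhds_iff.1 h with ⟨ε, hε, hsub⟩
    exact ⟨ε, hε, fun y hy => hsub hy⟩
  have hρ_int : Integrable ρ := by
    by_contra hc
    rw [integral_undef hc] at hρ_prob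
    norm_num at hρ_prob
  have hlρ : ∫⁻ y, ENNReal.ofReal (ρ y) = 1 := by
    rw [← ofReal_integral_eq_lintegral_ofReal hρ_int (Eventually.of_forall hρ_nonneg),
      hρ_prob, ENNReal.ofReal_one]
  set c : Fin (m + 2) → Euc d → ℝ := fun i y =>
    if i = 0 then ‖x - y‖ ^ (d : ℝ) else if i = 1 then ‖x - y‖ ^ (-(d : ℝ)) else 1 with hc
  have hc_nonneg : ∀ i y, 0 ≤ c i y := by
    intro i y
    rw [hc]
    dsimp only
    split_ifs
    · exact Real.rpow_nonneg (norm_nonneg _) _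
    · exact Real.rpow_nonneg (norm_nonneg _) _
    · norm_num
  set F : Fin (m + 2) → Euc d → ℝ≥0∞ := fun i y => ENNReal.ofReal (c i y * ρ y) with hF
  have hmeas_pow : Measurable fun y : Euc d => ‖x - y‖ ^ (d : ℝ) := by
    have heq : (fun y : Euc d => ‖x - y‖ ^ (d : ℝ)) = fun y => ‖x - y‖ ^ d := by
      funext y; rw [Real.rpow_natCast]
    exact heq ▸ ((measurable_const.sub measurable_id).norm.pow_const d)
  have hmeas_neg : Measurable fun y : Euc d => ‖x - y‖ ^ (-(d : ℝ)) := by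
    have heq : (fun y : Euc d => ‖x - y‖ ^ (-(d : ℝ))) = fun y => (‖x - y‖ ^ d)⁻¹ := by
      funext y; rw [Real.rpow_neg (norm_nonneg _), Real.rpow_natCast]
    exact heq ▸ ((measurable_const.sub measurable_id).norm.pow_const d).inv
  have hF_meas : ∀ i, Measurable (F i) := by
    intro i
    apply ENNReal.measurable_ofReal.comp
    apply Measurable.mul _ hρ_meas
    rw [hc]
    dsimp only
    split_ifs
    · exact hmeas_pow
    · exact hmeas_neg
    · exact measurable_const
  have hpoint : ∀ xs : Fin (m + 2) → Euc d,
      (∏ i, F i (xs i)) ≤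
        ENNReal.ofReal (hilbertWeight d (m + 1) x xs 0 ^ β * ∏ i, ρ (xs i)) := by
    intro xs
    have h1 : (∏ i, F i (xs i)) =
        ENNReal.ofReal ((∏ i, c i (xs i)) * ∏ i, ρ (xs i)) := by
      rw [hF]
      dsimp only
      rw [← ENNReal.ofReal_prod_of_nonneg
        (fun i _ => mul_nonneg (hc_nonneg i _) (hρ_nonneg _)), Finset.prod_mul_distrib]
    have h2 : (∏ i, c i (xs i)) = ‖x - xs 0‖ ^ (d : ℝ) * ‖x - xs 1‖ ^ (-(d : ℝ)) := by
      rw [prod_split (fun i => c i (xs i)) (fun i hi0 hi1 => by simp [hc, hi0, hi1])]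
      simp [hc, fin_zero_ne_one m]
    rw [h1, h2]
    apply ENNReal.ofReal_le_ofReal
    exact mul_le_mul_of_nonneg_right (key_ineq d hd x xs hβ)
      (Finset.prod_nonneg fun i _ => hρ_nonneg _)
  have hfac : ∫⁻ xs : Fin (m + 2) → Euc d, ∏ i, F i (xs i) =
      (∫⁻ y, F 0 y) * ∫⁻ y, F 1 y := by
    rw [lintegral_pi_prod (m + 2) F hF_meas]
    apply prod_split (fun i => ∫⁻ y, F i y)
    intro i hi0 hi1
    have hFi : F i = fun y => ENNReal.ofReal (ρ y) := by
      funext y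
      simp [hF, hc, hi0, hi1]
    rw [hFi, hlρ]
  have hB : (∫⁻ y, F 1 y) = ⊤ := by
    refine top_le_iff.1 ?_
    have hne : ENNReal.ofReal (ρ x / 2) ≠ 0 := (ENNReal.ofReal_pos.2 (by linarith)).ne'
    calc (⊤ : ℝ≥0∞)
        = ENNReal.ofReal (ρ x / 2) *
            ∫⁻ y in Metric.ball x ε, ENNReal.ofReal (‖x - y‖ ^ (-(d : ℝ))) := by
          rw [lintegral_ball_top d hd x hε, ENNReal.mul_top hne]
      _ = ∫⁻ y in Metric.ball x ε,
            ENNReal.ofReal (ρ x / 2) * ENNReal.ofReal (‖x - y‖ ^ (-(d : ℝ))) :=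
          (lintegral_const_mul _ (ENNReal.measurable_ofReal.comp hmeas_neg)).symm
      _ ≤ ∫⁻ y in Metric.ball x ε, F 1 y := by
          refine setLIntegral_mono (hF_meas 1) fun y hy => ?_
          rw [← ENNReal.ofReal_mul (by linarith)]
          apply ENNReal.ofReal_le_ofReal
          have hρy : ρ x / 2 ≤ ρ y := (hballρ y hy).le
          have hc1 : c 1 (y) = ‖x - y‖ ^ (-(d : ℝ)) := by
            simp [hc, fin_zero_ne_one m]
          rw [hc1, mul_comm]
          exact mul_le_mul_of_nonneg_left hρy (Real.rpow_nonneg (norm_nonneg _) _)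
      _ ≤ ∫⁻ y, F 1 y := setLIntegral_le_lintegral _ _
  have hA : (∫⁻ y, F 0 y) ≠ 0 := by
    set U := Metric.ball x ε \ Metric.closedBall x (ε / 2) with hU
    have hUopen : IsOpen U := Metric.isOpen_ball.sdiff Metric.isClosed_closedBall
    have hUne : U.Nonempty := by
      refine ⟨x + (3 * ε / 4) • EuclideanSpace.single (⟨0, by omega⟩ : Fin d) (1 : ℝ), ?_, ?_⟩
      · rw [Metric.mem_ball, dist_eq_norm]
        simp only [add_sub_cancel_left, norm_smul, EuclideanSpace.norm_single]
        rw [Real.norm_eq_abs, abs_of_nonneg (by linarith), norm_one, mul_one]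
        linarith
      · rw [Metric.mem_closedBall, dist_eq_norm]
        simp only [add_sub_cancel_left, norm_smul, EuclideanSpace.norm_single]
        rw [Real.norm_eq_abs, abs_of_nonneg (by linarith), norm_one, mul_one]
        push_neg
        linarith
    have hUvol : 0 < volume U := hUopen.measure_pos volume hUne
    have hlow : ∀ y ∈ U, ENNReal.ofReal ((ε / 2) ^ (d : ℝ) * (ρ x / 2)) ≤ F 0 y := by
      intro y hy
      have hyb : ρ x / 2 < ρ y := hballρ y hy.1
      have hyn : ε / 2 < ‖x - y‖ := by
        have h2 : ¬ dist y x ≤ ε / 2 := hy.2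
        push_neg at h2
        rwa [dist_comm, dist_eq_norm] at h2
      have hc0 : c 0 y = ‖x - y‖ ^ (d : ℝ) := by simp [hc]
      rw [hF]
      dsimp only
      rw [hc0]
      apply ENNReal.ofReal_le_ofReal
      have hpow : (ε / 2) ^ (d : ℝ) ≤ ‖x - y‖ ^ (d : ℝ) :=
        Real.rpow_le_rpow (by linarith) hyn.le (Nat.cast_nonneg d)
      exact mul_le_mul hpow hyb.le (by linarith) (Real.rpow_nonneg (norm_nonneg _) _)
    have hcpos : (0 : ℝ≥0∞) < ENNReal.ofReal ((ε / 2) ^ (d : ℝ) * (ρ x / 2)) := by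
      apply ENNReal.ofReal_pos.2
      apply mul_pos (Real.rpow_pos_of_pos (by linarith) _) (by linarith)
    have : (0 : ℝ≥0∞) < ∫⁻ y, F 0 y := by
      calc (0 : ℝ≥0∞)
          < ENNReal.ofReal ((ε / 2) ^ (d : ℝ) * (ρ x / 2)) * volume U :=
            ENNReal.mul_pos hcpos.ne' hUvol.ne'
        _ = ∫⁻ _ in U, ENNReal.ofReal ((ε / 2) ^ (d : ℝ) * (ρ x / 2)) :=
            (setLIntegral_const _ _).symm
        _ ≤ ∫⁻ y in U, F 0 y := setLIntegral_mono (hF_meas 0) hlow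
        _ ≤ ∫⁻ y, F 0 y := setLIntegral_le_lintegral _ _
    exact this.ne'
  refine top_le_iff.1 ?_
  calc (⊤ : ℝ≥0∞) = (∫⁻ y, F 0 y) * ∫⁻ y, F 1 y := by rw [hB, ENNReal.mul_top hA]
    _ = ∫⁻ xs : Fin (m + 2) → Euc d, ∏ i, F i (xs i) := hfac.symm
    _ ≤ _ := lintegral_mono hpoint

end
end

section
/- Let d ≥ 1 and let ρ be a probability density on ℝ^d with finite variance. Fix x in the interior of the support of ρ, assume ρ is continuous at x, and let X_0,…,X_n be i.i.d. with density ρ. For −1 < β < 0, define κ_β(x) = ∫ ρ(x+y)·‖y‖^{|β|d} d^d y and κ_{|β|}(x) = ∫ ρ(x+y)·‖y‖^{−|β|d} d^d y. If κ_β(x) < ∞, then the Hilbert kernel weight w_0(x) = ‖x−X_0‖^{−d} / Σ_{j=0}^n ‖x−X_j‖^{−d} satisfies E[w_0(x)^β] ≤ 1 + n·κ_{|β|}(x)·κ_β(x); in particular this moment is finite. -/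
open MeasureTheory Filter

noncomputable section

section Auxiliary

open Metric Set

lemma real_rpow_add_le_add_rpow {p : ℝ} {a b : ℝ} (ha : 0 ≤ a) (hb : 0 ≤ b)
    (hp0 : 0 ≤ p) (hp1 : p ≤ 1) : (a + b) ^ p ≤ a ^ p + b ^ p := by
  have h := NNReal.coe_le_coe.2 (NNReal.rpow_add_le_add_rpow a.toNNReal b.toNNReal hp0 hp1)
  push_cast at h
  rwa [Real.coe_toNNReal _ ha, Real.coe_toNNReal _ hb] at h

lemma one_add_sum_rpow_le {ι : Type*} (s : Finset ι) (f : ι → ℝ) (hf : ∀ i ∈ s, 0 ≤ f i)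
    {p : ℝ} (hp0 : 0 ≤ p) (hp1 : p ≤ 1) :
    (1 + ∑ i ∈ s, f i) ^ p ≤ 1 + ∑ i ∈ s, f i ^ p := by
  induction s using Finset.cons_induction with
  | empty => simp
  | cons a s ha ih =>
    have hfa : 0 ≤ f a := hf a (Finset.mem_cons_self a s)
    have hfs : ∀ i ∈ s, 0 ≤ f i := fun i hi => hf i (Finset.mem_cons.2 (Or.inr hi))
    have hsum : 0 ≤ ∑ i ∈ s, f i := Finset.sum_nonneg hfs
    rw [Finset.sum_cons, Finset.sum_cons]
    calc (1 + (f a + ∑ i ∈ s, f i)) ^ p = ((1 + ∑ i ∈ s, f i) + f a) ^ p := by ring_nf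
    _ ≤ (1 + ∑ i ∈ s, f i) ^ p + f a ^ p :=
        real_rpow_add_le_add_rpow (by linarith) hfa hp0 hp1
    _ ≤ (1 + ∑ i ∈ s, f i ^ p) + f a ^ p := by linarith [ih hfs]
    _ = 1 + (f a ^ p + ∑ i ∈ s, f i ^ p) := by ring

lemma integrableOn_norm_rpow_ball (d : ℕ) (hd : 1 ≤ d) {c : ℝ} (hc0 : 0 < c) (hcd : c < d)
    (R : ℝ) : IntegrableOn (fun y : Euc d => ‖y‖ ^ (-c)) (Metric.ball 0 R) := by
  have hmeas : Measurable fun y : Euc d => ‖y‖ ^ (-c) := by fun_prop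
  constructor
  · exact hmeas.aestronglyMeasurable
  · have hnn : (0:Euc d → ℝ) ≤ fun y => ‖y‖ ^ (-c) :=
      fun y => Real.rpow_nonneg (norm_nonneg _) _
    rw [HasFiniteIntegral,
      lintegral_enorm_of_nonneg hnn,
      lintegral_eq_lintegral_meas_le _ (Filter.Eventually.of_forall hnn) hmeas.aemeasurable]
    set μ := (volume : Measure (Euc d)).restrict (Metric.ball 0 R)
    have hsub : ∀ t : ℝ, 0 < t →
        {a : Euc d | t ≤ ‖a‖ ^ (-c)} ⊆ Metric.closedBall 0 (t ^ (-c⁻¹)) := by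
      intro t ht a ha
      simp only [Set.mem_setOf_eq] at ha
      have hapos : 0 < ‖a‖ := by
        rcases eq_or_lt_of_le (norm_nonneg a) with h | h
        · exfalso
          rw [← h, Real.zero_rpow (neg_ne_zero.2 hc0.ne')] at ha
          · linarith
        · exact h
      rw [Metric.mem_closedBall, dist_zero_right]
      have h2 := Real.rpow_le_rpow_of_nonpos ht ha (neg_nonpos.2 (inv_nonneg.2 hc0.le))
      rwa [← Real.rpow_mul (norm_nonneg a), neg_mul_neg, mul_inv_cancel₀ hc0.ne',
        Real.rpow_one] at h2
    calc ∫⁻ t in Set.Ioi (0:ℝ), μ {a : Euc d | t ≤ ‖a‖ ^ (-c)}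
        ≤ ∫⁻ t in Set.Ioc (0:ℝ) 1 ∪ Set.Ioi 1, μ {a : Euc d | t ≤ ‖a‖ ^ (-c)} :=
          lintegral_mono_set Set.Ioi_subset_Ioc_union_Ioi
      _ ≤ (∫⁻ t in Set.Ioc (0:ℝ) 1, μ {a : Euc d | t ≤ ‖a‖ ^ (-c)}) +
          ∫⁻ t in Set.Ioi (1:ℝ), μ {a : Euc d | t ≤ ‖a‖ ^ (-c)} := lintegral_union_le _ _ _
      _ < ⊤ := by
          refine ENNReal.add_lt_top.2 ⟨?_, ?_⟩
          · calc (∫⁻ t in Set.Ioc (0:ℝ) 1, μ {a : Euc d | t ≤ ‖a‖ ^ (-c)})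
                ≤ ∫⁻ _t in Set.Ioc (0:ℝ) 1, μ Set.univ :=
                  setLIntegral_mono' measurableSet_Ioc fun t _ => measure_mono (Set.subset_univ _)
              _ = μ Set.univ * volume (Set.Ioc (0:ℝ) 1) := by
                  rw [setLIntegral_const]
              _ < ⊤ := by
                  apply ENNReal.mul_lt_top _ (by simp)
                  have : μ Set.univ = volume (Metric.ball (0:Euc d) R) := by
                    simp [μ, Measure.restrict_apply_univ]
                  rw [this]
                  exact measure_ball_lt_top
          · have hbd : ∀ t ∈ Set.Ioi (1:ℝ), μ {a : Euc d | t ≤ ‖a‖ ^ (-c)}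
                ≤ ENNReal.ofReal (t ^ (-((d:ℝ)/c))) * volume (Metric.ball (0:Euc d) 1) := by
              intro t ht
              have ht0 : (0:ℝ) < t := lt_trans one_pos ht
              calc μ {a : Euc d | t ≤ ‖a‖ ^ (-c)}
                  ≤ volume (Metric.closedBall (0:Euc d) (t ^ (-c⁻¹))) :=
                    le_trans (Measure.restrict_apply_le _ _) (measure_mono (hsub t ht0))
                _ = ENNReal.ofReal ((t ^ (-c⁻¹)) ^ (Module.finrank ℝ (Euc d))) *
                      volume (Metric.ball (0:Euc d) 1) :=
                    Measure.addHaar_closedBall _ _ (Real.rpow_nonneg ht0.le _)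
                _ = ENNReal.ofReal (t ^ (-((d:ℝ)/c))) * volume (Metric.ball (0:Euc d) 1) := by
                    congr 2
                    rw [← Real.rpow_natCast (t ^ (-c⁻¹)) _, ← Real.rpow_mul ht0.le]
                    congr 1
                    · rw [finrank_euclideanSpace_fin]
                      field_simp
            calc (∫⁻ t in Set.Ioi (1:ℝ), μ {a : Euc d | t ≤ ‖a‖ ^ (-c)})
                ≤ ∫⁻ t in Set.Ioi (1:ℝ),
                    ENNReal.ofReal (t ^ (-((d:ℝ)/c))) * volume (Metric.ball (0:Euc d) 1) :=
                  setLIntegral_mono' measurableSet_Ioi hbd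
              _ = (∫⁻ t in Set.Ioi (1:ℝ), ENNReal.ofReal (t ^ (-((d:ℝ)/c)))) *
                    volume (Metric.ball (0:Euc d) 1) := by
                  rw [lintegral_mul_const' _ _ measure_ball_lt_top.ne]
              _ < ⊤ := by
                  apply ENNReal.mul_lt_top _ measure_ball_lt_top
                  have hint : IntegrableOn (fun t : ℝ => t ^ (-((d:ℝ)/c))) (Set.Ioi 1) := by
                    apply integrableOn_Ioi_rpow_of_lt _ one_pos
                    rw [neg_lt_neg_iff, lt_div_iff₀ hc0, one_mul]
                    exact hcd
                  exact hint.setLIntegral_lt_top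

lemma integrable_rho_rpow_neg (d : ℕ) (hd : 1 ≤ d) (ρ : Euc d → ℝ) (hρ_meas : Measurable ρ)
    (hρ_nonneg : ∀ y, 0 ≤ ρ y) (hρ_int : Integrable ρ) (x : Euc d) (hρ_cont : ContinuousAt ρ x)
    {c : ℝ} (hc0 : 0 < c) (hcd : c < d) :
    Integrable (fun y => ρ y * ‖x - y‖ ^ (-c)) := by
  obtain ⟨ε, hε, hbd⟩ : ∃ ε > 0, ∀ y, dist y x < ε → ρ y < ρ x + 1 := by
    have h := hρ_cont.eventually_lt_const (lt_add_one (ρ x))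
    rw [Metric.eventually_nhds_iff] at h
    obtain ⟨ε, hε, h⟩ := h
    exact ⟨ε, hε, fun y hy => h hy⟩
  have hmeas : Measurable fun y : Euc d => ρ y * ‖x - y‖ ^ (-c) :=
    hρ_meas.mul ((measurable_const.sub measurable_id).norm.pow_const _)
  rw [← integrableOn_univ, ← Set.union_compl_self (Metric.ball x ε)]
  apply IntegrableOn.union
  · -- on the ball
    have hball : IntegrableOn (fun y : Euc d => ‖x - y‖ ^ (-c)) (Metric.ball x ε) := by
      have h0 : IntegrableOn (fun y : Euc d => ‖y‖ ^ (-c)) (Metric.ball 0 ε) :=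
        integrableOn_norm_rpow_ball d hd hc0 hcd ε
      have hmap : (volume : Measure (Euc d)).map (MeasurableEquiv.subLeft x) = volume :=
        (Measure.measurePreserving_sub_left volume x).map_eq
      rw [← hmap] at h0
      rw [integrableOn_map_equiv] at h0
      have hset : (MeasurableEquiv.subLeft x) ⁻¹' (Metric.ball 0 ε) = Metric.ball x ε := by
        ext y
        simp [MeasurableEquiv.subLeft, Equiv.subLeft, Metric.mem_ball, dist_eq_norm,
          norm_sub_rev]
      rw [hset] at h0
      exact h0.congr_fun (fun y _ => rfl) (Metric.isOpen_ball.measurableSet)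
    apply Integrable.mono' (hball.const_mul (ρ x + 1)) hmeas.aestronglyMeasurable.restrict
    rw [ae_restrict_iff' Metric.isOpen_ball.measurableSet]
    apply Filter.Eventually.of_forall
    intro y hy
    rw [Real.norm_of_nonneg (mul_nonneg (hρ_nonneg y) (Real.rpow_nonneg (norm_nonneg _) _))]
    exact mul_le_mul_of_nonneg_right (le_of_lt (hbd y (Metric.mem_ball.1 hy)))
      (Real.rpow_nonneg (norm_nonneg _) _)
  · -- off the ball
    apply Integrable.mono' ((hρ_int.const_mul (ε ^ (-c))).restrict)
      hmeas.aestronglyMeasurable.restrict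
    rw [ae_restrict_iff' Metric.isOpen_ball.measurableSet.compl]
    apply Filter.Eventually.of_forall
    intro y hy
    have hdist : ε ≤ ‖x - y‖ := by
      rw [Set.mem_compl_iff, Metric.mem_ball, not_lt, dist_eq_norm, ← norm_sub_rev] at hy
      exact hy
    rw [Real.norm_of_nonneg (mul_nonneg (hρ_nonneg y) (Real.rpow_nonneg (norm_nonneg _) _)),
      mul_comm (ε ^ (-c))]
    exact mul_le_mul_of_nonneg_left
      (Real.rpow_le_rpow_of_nonpos hε hdist (neg_nonpos.2 hc0.le)) (hρ_nonneg y)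

end Auxiliary

open Metric Set in
/-- for `−1 < β < 0`, with `κ_β(x) = ∫ ρ(x+y)·‖y‖^{|β|d} dy` assumed finite and
`κ_{|β|}(x) = ∫ ρ(x+y)·‖y‖^{−|β|d} dy`, the β-th moment of the Hilbert kernel weight `w_0(x)`
is finite and satisfies `E[w_0(x)^β] ≤ 1 + n·κ_{|β|}(x)·κ_β(x)`. -/
theorem hilbert_moment_bound_neg_beta
    (d : ℕ) (hd : 1 ≤ d)
    (ρ : Euc d → ℝ) (hρ_meas : Measurable ρ) (hρ_nonneg : ∀ y, 0 ≤ ρ y)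
    (hρ_prob : (∫ y, ρ y) = 1)
    (hρ_var : Integrable (fun y => ρ y * ‖y‖ ^ 2))
    (x : Euc d) (hx : x ∈ interior {y | 0 < ρ y}) (hρ_cont : ContinuousAt ρ x)
    (n : ℕ) (β : ℝ) (hβ0 : -1 < β) (hβ1 : β < 0)
    (hκβ : Integrable (fun y : Euc d => ρ (x + y) * ‖y‖ ^ (|β| * d))) :
    Integrable (fun xs : Fin (n + 1) → Euc d =>
        hilbertWeight d n x xs 0 ^ β * ∏ i : Fin (n + 1), ρ (xs i)) ∧
    (∫ xs : Fin (n + 1) → Euc d,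
        hilbertWeight d n x xs 0 ^ β * ∏ i : Fin (n + 1), ρ (xs i)) ≤
      1 + (n : ℝ) * (∫ y : Euc d, ρ (x + y) * ‖y‖ ^ (-(|β| * d))) *
        (∫ y : Euc d, ρ (x + y) * ‖y‖ ^ (|β| * d)) := by
  classical
  have hd0 : (0:ℝ) < d := by exact_mod_cast Nat.lt_of_lt_of_le Nat.zero_lt_one hd
  have hβne : β ≠ 0 := ne_of_lt hβ1
  have habs : |β| = -β := abs_of_neg hβ1
  have habs_pos : (0:ℝ) < |β| := abs_pos.2 hβne
  have habs_le : |β| ≤ 1 := by rw [habs]; linarith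
  set c : ℝ := |β| * d with hc_def
  have hc0 : 0 < c := mul_pos habs_pos hd0
  have hcd : c < d := by
    have h1 : |β| < 1 := by rw [habs]; linarith
    nlinarith
  have hρ_int : Integrable ρ := by
    by_contra h
    rw [integral_undef h] at hρ_prob
    exact one_ne_zero hρ_prob.symm
  -- one-dimensional integrability
  have hA : Integrable (fun y : Euc d => ρ y * ‖x - y‖ ^ (-c)) :=
    integrable_rho_rpow_neg d hd ρ hρ_meas hρ_nonneg hρ_int x hρ_cont hc0 hcd
  have hB : Integrable (fun y : Euc d => ρ y * ‖x - y‖ ^ c) := by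
    have h2 : Integrable (fun y : Euc d => ρ (x + (y - x)) * ‖y - x‖ ^ c) :=
      hκβ.comp_sub_right x
    apply h2.congr
    apply Filter.Eventually.of_forall
    intro y
    show ρ (x + (y - x)) * ‖y - x‖ ^ c = ρ y * ‖x - y‖ ^ c
    have hxy : x + (y - x) = y := by abel
    rw [hxy, norm_sub_rev]
  -- translation identities
  have hKeq : (∫ y : Euc d, ρ y * ‖x - y‖ ^ c) = ∫ y : Euc d, ρ (x + y) * ‖y‖ ^ c := by
    rw [← integral_sub_right_eq_self (fun y : Euc d => ρ (x + y) * ‖y‖ ^ c) x]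
    refine integral_congr_ae (Filter.Eventually.of_forall fun y => ?_)
    show ρ y * ‖x - y‖ ^ c = ρ (x + (y - x)) * ‖y - x‖ ^ c
    have hxy : x + (y - x) = y := by abel
    rw [hxy, norm_sub_rev]
  have hK'eq : (∫ y : Euc d, ρ y * ‖x - y‖ ^ (-c)) = ∫ y : Euc d, ρ (x + y) * ‖y‖ ^ (-c) := by
    rw [← integral_sub_right_eq_self (fun y : Euc d => ρ (x + y) * ‖y‖ ^ (-c)) x]
    refine integral_congr_ae (Filter.Eventually.of_forall fun y => ?_)
    show ρ y * ‖x - y‖ ^ (-c) = ρ (x + (y - x)) * ‖y - x‖ ^ (-c)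
    have hxy : x + (y - x) = y := by abel
    rw [hxy, norm_sub_rev]
  -- the coordinatewise factors
  set F : Fin (n+1) → Fin (n+1) → Euc d → ℝ := fun j i y =>
    ρ y * ((if i = 0 then ‖x - y‖ ^ c else 1) * (if i = j then ‖x - y‖ ^ (-c) else 1)) with hF
  have hF0 : ∀ j : Fin (n+1), j ≠ 0 → F j 0 = fun y => ρ y * ‖x - y‖ ^ c := by
    intro j hj
    funext y
    simp only [hF]
    rw [if_neg (Ne.symm hj)]
    simp
  have hFj : ∀ j : Fin (n+1), j ≠ 0 → F j j = fun y => ρ y * ‖x - y‖ ^ (-c) := by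
    intro j hj
    funext y
    simp only [hF]
    rw [if_neg hj]
    simp
  have hFo : ∀ j i : Fin (n+1), i ≠ 0 → i ≠ j → F j i = ρ := by
    intro j i h0 hij
    funext y
    simp only [hF]
    rw [if_neg h0, if_neg hij]
    simp
  have hF_int : ∀ j : Fin (n+1), j ≠ 0 → ∀ i, Integrable (F j i) := by
    intro j hj i
    rcases eq_or_ne i 0 with h0 | h0
    · rw [h0, hF0 j hj]; exact hB
    · rcases eq_or_ne i j with hij | hij
      · rw [hij, hFj j hj]; exact hA
      · rw [hFo j i h0 hij]; exact hρ_int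
  have hF_prod : ∀ j : Fin (n+1), ∀ xs : Fin (n+1) → Euc d,
      (∏ i, F j i (xs i)) = ‖x - xs 0‖ ^ c * ‖x - xs j‖ ^ (-c) * ∏ i, ρ (xs i) := by
    intro j xs
    simp only [hF]
    rw [Finset.prod_mul_distrib, Finset.prod_mul_distrib, Finset.prod_ite_eq',
      Finset.prod_ite_eq']
    simp only [Finset.mem_univ, if_true]
    ring
  -- integrability of pieces of the dominating function
  have hP_int : Integrable (fun xs : Fin (n+1) → Euc d => ∏ i, ρ (xs i)) :=
    Integrable.fintype_prod (f := fun _ : Fin (n+1) => ρ) fun _ => hρ_int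
  have ht_int : ∀ j ∈ Finset.univ.erase (0 : Fin (n+1)),
      Integrable (fun xs : Fin (n+1) → Euc d =>
        ‖x - xs 0‖ ^ c * ‖x - xs j‖ ^ (-c) * ∏ i, ρ (xs i)) := by
    intro j hj
    have h1 : Integrable (fun xs : Fin (n+1) → Euc d => ∏ i, F j i (xs i)) :=
      Integrable.fintype_prod (fun i => hF_int j (Finset.ne_of_mem_erase hj) i)
    exact h1.congr (Filter.Eventually.of_forall fun xs => hF_prod j xs)
  have hsum_int : Integrable (fun xs : Fin (n+1) → Euc d =>
      ∑ j ∈ Finset.univ.erase (0 : Fin (n+1)),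
        ‖x - xs 0‖ ^ c * ‖x - xs j‖ ^ (-c) * ∏ i, ρ (xs i)) :=
    integrable_finset_sum _ ht_int
  have hg_int : Integrable (fun xs : Fin (n+1) → Euc d =>
      (∏ i, ρ (xs i)) + ∑ j ∈ Finset.univ.erase (0 : Fin (n+1)),
        ‖x - xs 0‖ ^ c * ‖x - xs j‖ ^ (-c) * ∏ i, ρ (xs i)) := hP_int.add hsum_int
  -- nonnegativity of the integrand
  have hw_nonneg : ∀ xs : Fin (n+1) → Euc d, 0 ≤ hilbertWeight d n x xs 0 :=
    fun xs => div_nonneg (Real.rpow_nonneg (norm_nonneg _) _)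
      (Finset.sum_nonneg fun j _ => Real.rpow_nonneg (norm_nonneg _) _)
  have h_nonneg : ∀ xs : Fin (n+1) → Euc d,
      0 ≤ hilbertWeight d n x xs 0 ^ β * ∏ i, ρ (xs i) :=
    fun xs => mul_nonneg (Real.rpow_nonneg (hw_nonneg xs) _)
      (Finset.prod_nonneg fun i _ => hρ_nonneg _)
  -- the key pointwise inequality
  have hkey : ∀ xs : Fin (n+1) → Euc d, hilbertWeight d n x xs 0 ^ β ≤
      1 + ∑ j ∈ Finset.univ.erase (0 : Fin (n+1)),
        ‖x - xs 0‖ ^ c * ‖x - xs j‖ ^ (-c) := by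
    intro xs
    have hsum_nn : (0:ℝ) ≤ ∑ j ∈ Finset.univ.erase (0 : Fin (n+1)),
        ‖x - xs 0‖ ^ c * ‖x - xs j‖ ^ (-c) :=
      Finset.sum_nonneg fun j _ => mul_nonneg (Real.rpow_nonneg (norm_nonneg _) _)
        (Real.rpow_nonneg (norm_nonneg _) _)
    rcases eq_or_lt_of_le (norm_nonneg (x - xs 0)) with h0 | h0
    · have hw0 : hilbertWeight d n x xs 0 = 0 := by
        simp only [hilbertWeight]
        rw [← h0, Real.zero_rpow (neg_ne_zero.2 (ne_of_gt hd0)), zero_div]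
      rw [hw0, Real.zero_rpow hβne]
      linarith
    · set S : ℝ := ∑ j : Fin (n+1), ‖x - xs j‖ ^ (-(d:ℝ)) with hS
      have hr0d : 0 < ‖x - xs 0‖ ^ (-(d:ℝ)) := Real.rpow_pos_of_pos h0 _
      have hS_pos : 0 < S :=
        lt_of_lt_of_le hr0d (Finset.single_le_sum
          (fun j _ => Real.rpow_nonneg (norm_nonneg (x - xs j)) (-(d:ℝ)))
          (Finset.mem_univ (0 : Fin (n+1))))
      have hw_pos : 0 < hilbertWeight d n x xs 0 := div_pos hr0d hS_pos
      have hw_inv : (hilbertWeight d n x xs 0)⁻¹ = S * ‖x - xs 0‖ ^ (d:ℝ) := by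
        simp only [hilbertWeight, ← hS]
        rw [inv_div, div_eq_mul_inv, Real.rpow_neg (norm_nonneg _), inv_inv]
      have hwβ : hilbertWeight d n x xs 0 ^ β = (S * ‖x - xs 0‖ ^ (d:ℝ)) ^ (-β) := by
        rw [← hw_inv, Real.inv_rpow hw_pos.le, Real.rpow_neg hw_pos.le, inv_inv]
      have hexp : S * ‖x - xs 0‖ ^ (d:ℝ) =
          1 + ∑ j ∈ Finset.univ.erase (0 : Fin (n+1)),
            ‖x - xs j‖ ^ (-(d:ℝ)) * ‖x - xs 0‖ ^ (d:ℝ) := by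
        rw [hS, Finset.sum_mul, ← Finset.add_sum_erase _ _ (Finset.mem_univ (0 : Fin (n+1)))]
        congr 1
        rw [← Real.rpow_add h0, neg_add_cancel, Real.rpow_zero]
      have hterm : ∀ j : Fin (n+1),
          (‖x - xs j‖ ^ (-(d:ℝ)) * ‖x - xs 0‖ ^ (d:ℝ)) ^ (-β) =
            ‖x - xs 0‖ ^ c * ‖x - xs j‖ ^ (-c) := by
        intro j
        rw [Real.mul_rpow (Real.rpow_nonneg (norm_nonneg _) _)
            (Real.rpow_nonneg (norm_nonneg _) _),
          ← Real.rpow_mul (norm_nonneg _), ← Real.rpow_mul (norm_nonneg _)]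
        have e1 : -(d:ℝ) * (-β) = -c := by rw [hc_def, habs]; ring
        have e2 : (d:ℝ) * (-β) = c := by rw [hc_def, habs]; ring
        rw [e1, e2, mul_comm]
      rw [hwβ, hexp]
      calc (1 + ∑ j ∈ Finset.univ.erase (0 : Fin (n+1)),
              ‖x - xs j‖ ^ (-(d:ℝ)) * ‖x - xs 0‖ ^ (d:ℝ)) ^ (-β)
          ≤ 1 + ∑ j ∈ Finset.univ.erase (0 : Fin (n+1)),
              (‖x - xs j‖ ^ (-(d:ℝ)) * ‖x - xs 0‖ ^ (d:ℝ)) ^ (-β) :=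
            one_add_sum_rpow_le _ _
              (fun j _ => mul_nonneg (Real.rpow_nonneg (norm_nonneg _) _)
                (Real.rpow_nonneg (norm_nonneg _) _))
              (by linarith) (by linarith)
        _ = 1 + ∑ j ∈ Finset.univ.erase (0 : Fin (n+1)),
              ‖x - xs 0‖ ^ c * ‖x - xs j‖ ^ (-c) := by
            rw [Finset.sum_congr rfl fun j _ => hterm j]
  -- pointwise domination
  have h_le : ∀ xs : Fin (n+1) → Euc d,
      hilbertWeight d n x xs 0 ^ β * ∏ i, ρ (xs i) ≤
        (∏ i, ρ (xs i)) + ∑ j ∈ Finset.univ.erase (0 : Fin (n+1)),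
          ‖x - xs 0‖ ^ c * ‖x - xs j‖ ^ (-c) * ∏ i, ρ (xs i) := by
    intro xs
    have hP_nn : (0:ℝ) ≤ ∏ i, ρ (xs i) := Finset.prod_nonneg fun i _ => hρ_nonneg _
    calc hilbertWeight d n x xs 0 ^ β * ∏ i, ρ (xs i)
        ≤ (1 + ∑ j ∈ Finset.univ.erase (0 : Fin (n+1)),
            ‖x - xs 0‖ ^ c * ‖x - xs j‖ ^ (-c)) * ∏ i, ρ (xs i) :=
          mul_le_mul_of_nonneg_right (hkey xs) hP_nn
      _ = (∏ i, ρ (xs i)) + ∑ j ∈ Finset.univ.erase (0 : Fin (n+1)),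
            ‖x - xs 0‖ ^ c * ‖x - xs j‖ ^ (-c) * ∏ i, ρ (xs i) := by
          rw [add_mul, one_mul, Finset.sum_mul]
  -- measurability of the integrand
  have h_meas : Measurable (fun xs : Fin (n+1) → Euc d =>
      hilbertWeight d n x xs 0 ^ β * ∏ i, ρ (xs i)) := by
    have hw : Measurable (fun xs : Fin (n+1) → Euc d => hilbertWeight d n x xs 0) := by
      apply Measurable.div
      · exact (measurable_const.sub (measurable_pi_apply 0)).norm.pow_const _
      · exact Finset.measurable_sum _ fun j _ =>
          (measurable_const.sub (measurable_pi_apply j)).norm.pow_const _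
    exact (hw.pow_const β).mul
      (Finset.measurable_prod _ fun i _ => hρ_meas.comp (measurable_pi_apply i))
  -- integrability of the integrand
  have h_int : Integrable (fun xs : Fin (n+1) → Euc d =>
      hilbertWeight d n x xs 0 ^ β * ∏ i, ρ (xs i)) := by
    apply Integrable.mono' hg_int h_meas.aestronglyMeasurable
    apply Filter.Eventually.of_forall
    intro xs
    rw [Real.norm_of_nonneg (h_nonneg xs)]
    exact h_le xs
  refine ⟨h_int, ?_⟩
  have hmono := integral_mono h_int hg_int h_le
  -- compute the integral of the dominating function
  have hint_prod : (∫ xs : Fin (n+1) → Euc d, ∏ i, ρ (xs i)) = 1 := by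
    rw [integral_fintype_prod_volume_eq_pow (ι := Fin (n+1)) ρ, hρ_prob, one_pow]
  have hFint_val : ∀ j : Fin (n+1), j ∈ Finset.univ.erase (0 : Fin (n+1)) →
      (∫ xs : Fin (n+1) → Euc d,
        ‖x - xs 0‖ ^ c * ‖x - xs j‖ ^ (-c) * ∏ i, ρ (xs i)) =
      (∫ y : Euc d, ρ y * ‖x - y‖ ^ c) * (∫ y : Euc d, ρ y * ‖x - y‖ ^ (-c)) := by
    intro j hj
    have hj0 : j ≠ 0 := Finset.ne_of_mem_erase hj
    have h1 : (∫ xs : Fin (n+1) → Euc d,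
        ‖x - xs 0‖ ^ c * ‖x - xs j‖ ^ (-c) * ∏ i, ρ (xs i)) =
        ∫ xs : Fin (n+1) → Euc d, ∏ i, F j i (xs i) :=
      integral_congr_ae (Filter.Eventually.of_forall fun xs => (hF_prod j xs).symm)
    rw [h1, integral_fintype_prod_volume_eq_prod]
    have hval : ∀ i : Fin (n+1), (∫ y : Euc d, F j i y) =
        (if i = 0 then (∫ y : Euc d, ρ y * ‖x - y‖ ^ c) else 1) *
        (if i = j then (∫ y : Euc d, ρ y * ‖x - y‖ ^ (-c)) else 1) := by
      intro i
      rcases eq_or_ne i 0 with h0 | h0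
      · subst h0
        rw [hF0 j hj0, if_neg (Ne.symm hj0)]
        simp
      · rcases eq_or_ne i j with hij | hij
        · rw [hij, hFj j hj0, if_neg hj0]
          simp
        · rw [hFo j i h0 hij, if_neg h0, if_neg hij, mul_one, hρ_prob]
    rw [Finset.prod_congr rfl fun i _ => hval i, Finset.prod_mul_distrib,
      Finset.prod_ite_eq', Finset.prod_ite_eq']
    simp only [Finset.mem_univ, if_true]
  have hcard : (Finset.univ.erase (0 : Fin (n+1))).card = n := by
    rw [Finset.card_erase_of_mem (Finset.mem_univ _), Finset.card_univ, Fintype.card_fin]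
    simp
  have hgval : (∫ xs : Fin (n+1) → Euc d,
      ((∏ i, ρ (xs i)) + ∑ j ∈ Finset.univ.erase (0 : Fin (n+1)),
        ‖x - xs 0‖ ^ c * ‖x - xs j‖ ^ (-c) * ∏ i, ρ (xs i))) =
      1 + (n:ℝ) * ((∫ y : Euc d, ρ y * ‖x - y‖ ^ c) * (∫ y : Euc d, ρ y * ‖x - y‖ ^ (-c))) := by
    rw [integral_add hP_int hsum_int, integral_finset_sum _ ht_int, hint_prod,
      Finset.sum_congr rfl hFint_val, Finset.sum_const, hcard, nsmul_eq_mul]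
  rw [hgval] at hmono
  rw [← hKeq, ← hK'eq]
  linarith [hmono]

end
end

section
/- Consider binary classification: Y ∈ {0,1}, f(x) = P(Y=1|X=x), F(x) = θ(f(x)−1/2) the Bayes classifier, and F̂(x) = θ(f̂(x)−1/2) the plugin classifier built from any estimator f̂(x) of f(x) (random through the training sample). Then for every 0 < α < 1 and every x, the following inequality holds unconditionally: 0 ≤ E[R(F̂(x))] − R(F(x)) ≤ 2·|f(x)−1/2|^{1−α}·(E[|f̂(x)−f(x)|²])^{α/2}, where R denotes the pointwise risk under zero-one loss. -/
open MeasureTheory Filter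

/-- Key arithmetic lemma: if `p ∈ [0,1]`, `d ≥ 0`, `E2 ≥ 0` and `d^2 * p ≤ E2`, then
`2*d*p ≤ 2*d^(1-α)*E2^(α/2)` for `0 < α < 1`. -/
lemma key_rpow_bound (d p E2 α : ℝ) (hd : 0 ≤ d) (hp0 : 0 ≤ p) (hp1 : p ≤ 1)
    (hE0 : 0 ≤ E2) (hE : d ^ 2 * p ≤ E2) (hα0 : 0 < α) (hα1 : α < 1) :
    2 * d * p ≤ 2 * d ^ (1 - α) * E2 ^ (α / 2) := by
  rcases eq_or_lt_of_le hd with hd0 | hdpos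
  · have : d = 0 := hd0.symm
    subst this
    have h1 : (0:ℝ) ^ (1 - α) = 0 := Real.zero_rpow (by linarith)
    simp [h1]
  · rcases eq_or_lt_of_le hp0 with hp00 | hppos
    · have : p = 0 := hp00.symm
      subst this
      have : 0 ≤ 2 * d ^ (1 - α) * E2 ^ (α / 2) := by positivity
      simpa using this
    · -- p ≤ (E2 / d^2)^(α/2)
      have hd2 : (0:ℝ) < d ^ 2 := by positivity
      have hple : p ≤ E2 / d ^ 2 := (le_div_iff₀ hd2).mpr (by linarith [hE])
      have h1 : p = p ^ (α / 2) * p ^ (1 - α / 2) := by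
        rw [← Real.rpow_add hppos]; norm_num
      have h2 : p ^ (1 - α / 2) ≤ 1 :=
        Real.rpow_le_one hp0 hp1 (by linarith)
      have h3 : p ^ (α / 2) ≤ (E2 / d ^ 2) ^ (α / 2) :=
        Real.rpow_le_rpow hp0 hple (by linarith)
      have h4 : p ≤ (E2 / d ^ 2) ^ (α / 2) := by
        calc p = p ^ (α / 2) * p ^ (1 - α / 2) := h1
        _ ≤ (E2 / d ^ 2) ^ (α / 2) * 1 := by
            apply mul_le_mul h3 h2 (Real.rpow_nonneg hp0 _) (Real.rpow_nonneg (by positivity) _)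
        _ = (E2 / d ^ 2) ^ (α / 2) := by ring
      have h5 : (E2 / d ^ 2) ^ (α / 2) = E2 ^ (α / 2) / d ^ α := by
        rw [Real.div_rpow hE0 (by positivity)]
        congr 1
        rw [← Real.rpow_natCast d 2, ← Real.rpow_mul hd]
        congr 1
        ring
      have h6 : d * (E2 ^ (α / 2) / d ^ α) = d ^ (1 - α) * E2 ^ (α / 2) := by
        rw [Real.rpow_sub hdpos, Real.rpow_one]
        field_simp
      calc 2 * d * p ≤ 2 * d * (E2 ^ (α / 2) / d ^ α) := by
            rw [← h5]
            exact mul_le_mul_of_nonneg_left h4 (by positivity)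
        _ = 2 * d ^ (1 - α) * E2 ^ (α / 2) := by rw [mul_assoc, h6, mul_assoc]

/-- for binary classification with `f(x) = P(Y=1|X=x) = a ∈ [0,1]` at the
point `x`, and any (square-integrable, measurable) estimator `g = f̂(x)` of `a` defined on a
probability space `(Ω, P)`, the excess risk of the plugin classifier `θ(f̂(x)−1/2)` over the
Bayes risk `R(F(x)) = min(a, 1−a)` satisfies, for every `0 < α < 1`,
`0 ≤ E[R(F̂(x))] − R(F(x)) ≤ 2·|a−1/2|^{1−α}·(E[|f̂(x)−f(x)|²])^{α/2}`,
where `E[R(F̂(x))] = E[if f̂(x) ≥ 1/2 then 1−a else a]`. -/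
theorem plugin_classifier_excess_risk_bound
    {Ω : Type*} [MeasurableSpace Ω] (P : Measure Ω) [IsProbabilityMeasure P]
    (g : Ω → ℝ) (hg : Measurable g)
    (a : ℝ) (ha0 : 0 ≤ a) (ha1 : a ≤ 1)
    (hint : Integrable (fun ω => (g ω - a) ^ 2) P)
    (α : ℝ) (hα0 : 0 < α) (hα1 : α < 1) :
    0 ≤ (∫ ω, (if (1 : ℝ) / 2 ≤ g ω then 1 - a else a) ∂P) - min a (1 - a) ∧
    (∫ ω, (if (1 : ℝ) / 2 ≤ g ω then 1 - a else a) ∂P) - min a (1 - a) ≤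
      2 * |a - 1 / 2| ^ (1 - α) * (∫ ω, (g ω - a) ^ 2 ∂P) ^ (α / 2) := by
  set S : Set Ω := {ω | (1 : ℝ) / 2 ≤ g ω} with hSdef
  have hSm : MeasurableSet S := measurableSet_le measurable_const hg
  set s : ℝ := (P S).toReal with hsdef
  have hs0 : (0:ℝ) ≤ s := ENNReal.toReal_nonneg
  have hs1 : s ≤ 1 := by
    have h : P S ≤ 1 := prob_le_one
    simpa using ENNReal.toReal_mono ENNReal.one_ne_top h
  -- compute the integral
  have heq : (fun ω => if (1 : ℝ) / 2 ≤ g ω then 1 - a else a)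
      = fun ω => a + S.indicator (fun _ => 1 - 2 * a) ω := by
    funext ω
    by_cases h : (1 : ℝ) / 2 ≤ g ω
    · have hω : ω ∈ S := h
      rw [if_pos h, Set.indicator_of_mem hω]; ring
    · have hω : ω ∉ S := h
      rw [if_neg h, Set.indicator_of_notMem hω]; ring
  have hIint : Integrable (S.indicator (fun _ => (1 : ℝ) - 2 * a)) P :=
    (integrable_const (1 - 2 * a)).indicator hSm
  have hI : (∫ ω, (if (1 : ℝ) / 2 ≤ g ω then 1 - a else a) ∂P) = a + (1 - 2 * a) * s := by
    rw [heq, integral_add (integrable_const a) hIint, integral_const,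
      integral_indicator_const _ hSm]
    simp [smul_eq_mul, mul_comm]
    exact Or.inl rfl
  set E2 : ℝ := ∫ ω, (g ω - a) ^ 2 ∂P with hE2def
  have hE20 : 0 ≤ E2 := integral_nonneg fun ω => sq_nonneg _
  by_cases hca : a ≤ 1 / 2
  · -- Bayes classifier says 0; mistake set is S
    have hmin : min a (1 - a) = a := min_eq_left (by linarith)
    set d : ℝ := 1 / 2 - a with hddef
    have hd0 : 0 ≤ d := by simp [hddef]; linarith
    have habs : |a - 1 / 2| = d := by
      rw [abs_of_nonpos (by linarith)]; simp [hddef]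
    have hptw : ∀ ω, S.indicator (fun _ => d ^ 2) ω ≤ (g ω - a) ^ 2 := by
      intro ω
      by_cases h : ω ∈ S
      · have hg2 : (1 : ℝ) / 2 ≤ g ω := h
        simp only [Set.indicator_of_mem h]
        have h1 : d ≤ g ω - a := by rw [hddef]; linarith
        exact pow_le_pow_left₀ hd0 h1 2
      · simp only [Set.indicator_of_notMem h]
        exact sq_nonneg _
    have hd2p : d ^ 2 * s ≤ E2 := by
      have := integral_mono ((integrable_const (d ^ 2)).indicator hSm) hint hptw
      rwa [integral_indicator_const _ hSm, smul_eq_mul, mul_comm] at this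
    have hkey := key_rpow_bound d s E2 α hd0 hs0 hs1 hE20 hd2p hα0 hα1
    constructor
    · rw [hI, hmin]; nlinarith
    · rw [hI, hmin, habs]
      calc a + (1 - 2 * a) * s - a = 2 * d * s := by rw [hddef]; ring
        _ ≤ 2 * d ^ (1 - α) * E2 ^ (α / 2) := hkey
  · -- Bayes classifier says 1; mistake set is Sᶜ
    push_neg at hca
    have hmin : min a (1 - a) = 1 - a := min_eq_right (by linarith)
    set d : ℝ := a - 1 / 2 with hddef
    have hd0 : 0 ≤ d := by simp [hddef]; linarith
    have habs : |a - 1 / 2| = d := abs_of_nonneg (by linarith)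
    have hsc : (P Sᶜ).toReal = 1 - s := by
      rw [measure_compl hSm (measure_ne_top P S), measure_univ,
        ENNReal.toReal_sub_of_le (prob_le_one) ENNReal.one_ne_top]
      simp [hsdef]
    have hptw : ∀ ω, Sᶜ.indicator (fun _ => d ^ 2) ω ≤ (g ω - a) ^ 2 := by
      intro ω
      by_cases h : ω ∈ Sᶜ
      · have hg2 : ¬ ((1 : ℝ) / 2 ≤ g ω) := h
        push_neg at hg2
        simp only [Set.indicator_of_mem h]
        have h1 : d ≤ a - g ω := by rw [hddef]; linarith
        calc d ^ 2 ≤ (a - g ω) ^ 2 := pow_le_pow_left₀ hd0 h1 2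
          _ = (g ω - a) ^ 2 := by ring
      · simp only [Set.indicator_of_notMem h]
        exact sq_nonneg _
    have hd2p : d ^ 2 * (1 - s) ≤ E2 := by
      have := integral_mono ((integrable_const (d ^ 2)).indicator hSm.compl) hint hptw
      rwa [integral_indicator_const _ hSm.compl, smul_eq_mul, Measure.real, hsc, mul_comm] at this
    have hkey := key_rpow_bound d (1 - s) E2 α hd0 (by linarith) (by linarith) hE20 hd2p hα0 hα1
    constructor
    · rw [hI, hmin]; nlinarith
    · rw [hI, hmin, habs]
      calc a + (1 - 2 * a) * s - (1 - a) = 2 * d * (1 - s) := by rw [hddef]; ring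
        _ ≤ 2 * d ^ (1 - α) * E2 ^ (α / 2) := hkey
end

section
/- Let d ≥ 1, let ρ be a probability density on ℝ^d with finite variance and support Ω, assume ∫ ρ(y)·|f(y)|/(1+‖y‖^d) d^d y < ∞, and let f̂_∞(x) = (∫ ρ(y)·f(y)·‖x−y‖^{−d} d^d y)/(∫ ρ(y)·‖x−y‖^{−d} d^d y) for x ∉ Ω̄. Let x_0 ∈ ∂Ω with ρ(x_0) > 0, assume that ρ and f restricted to Ω are continuous at x_0 (i.e. ρ(y) → ρ(x_0) and f(y) → f(x_0) as y → x_0 within Ω), and assume the local solid angle ω_0 = lim_{r→0} (1/(V_d·ρ(x_0)·r^d))·∫_{‖x_0−y‖≤r} ρ(y) d^d y exists and satisfies ω_0 > 0. Then lim_{x ∉ Ω̄, x → x_0} f̂_∞(x) = f(x_0). -/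
open MeasureTheory Filter

noncomputable section

/-- The large-sample extrapolation function of the Hilbert kernel regression scheme,
`f̂_∞(z) = (∫ ρ(y)·f(y)·‖z−y‖^{−d} dy) / (∫ ρ(y)·‖z−y‖^{−d} dy)`. -/
def hilbertExtrapolation (d : ℕ) (ρ f : Euc d → ℝ) (z : Euc d) : ℝ :=
  (∫ y : Euc d, ρ y * f y * ‖z - y‖ ^ (-(d : ℝ))) /
    ∫ y : Euc d, ρ y * ‖z - y‖ ^ (-(d : ℝ))

/-- The Hilbert kernel, written with natural powers. -/
private def kerH (d : ℕ) (x y : Euc d) : ℝ := (‖x - y‖ ^ d)⁻¹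

private lemma kerH_nonneg (d : ℕ) (x y : Euc d) : 0 ≤ kerH d x y := by
  rw [kerH]; positivity

private lemma kerH_meas (d : ℕ) (x : Euc d) : Measurable (fun y => kerH d x y) := by
  simp only [kerH]
  exact ((measurable_id.const_sub x).norm.pow_const d).inv

private lemma ker_rpow_eq (d : ℕ) (hd : 1 ≤ d) (a : ℝ) (ha : 0 ≤ a) :
    a ^ (-(d : ℝ)) = (a ^ d)⁻¹ := by
  rcases eq_or_lt_of_le ha with h | h
  · rw [← h, Real.zero_rpow (neg_ne_zero.mpr (Nat.cast_ne_zero.mpr (by omega))),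
      zero_pow (by omega), inv_zero]
  · rw [Real.rpow_neg ha, Real.rpow_natCast]

private lemma one_add_pow_le (d : ℕ) (hd : 1 ≤ d) {δ b t u : ℝ} (hδ : 0 < δ)
    (hb : 0 ≤ b) (ht : δ ≤ t) (hu : 0 ≤ u) (hub : u ≤ b + t) :
    1 + u ^ d ≤ 2 * (δ⁻¹ * (b + 1) + 1) ^ d * t ^ d := by
  have ht0 : 0 < t := hδ.trans_le ht
  have hδi : 0 < δ⁻¹ := inv_pos.2 hδ
  have hδi1 : δ⁻¹ * δ = 1 := inv_mul_cancel₀ hδ.ne'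
  have hδt : 1 ≤ δ⁻¹ * t := by
    have := mul_le_mul_of_nonneg_left ht hδi.le
    linarith
  have hbt : 0 ≤ δ⁻¹ * b * t := by positivity
  have hbδt : b * 1 ≤ b * (δ⁻¹ * t) := mul_le_mul_of_nonneg_left hδt hb
  have hAt : 1 ≤ (δ⁻¹ * (b + 1) + 1) * t := by nlinarith
  have hAt2 : b + t ≤ (δ⁻¹ * (b + 1) + 1) * t := by nlinarith
  have h1 : (1 : ℝ) ≤ ((δ⁻¹ * (b + 1) + 1) * t) ^ d := one_le_pow₀ hAt
  have h2 : u ^ d ≤ ((δ⁻¹ * (b + 1) + 1) * t) ^ d :=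
    pow_le_pow_left₀ hu (hub.trans hAt2) d
  have h3 : 1 + u ^ d ≤ 2 * ((δ⁻¹ * (b + 1) + 1) * t) ^ d := by linarith
  calc 1 + u ^ d ≤ 2 * ((δ⁻¹ * (b + 1) + 1) * t) ^ d := h3
    _ = 2 * (δ⁻¹ * (b + 1) + 1) ^ d * t ^ d := by rw [mul_pow]; ring

private lemma ker_inv_le (d : ℕ) (hd : 1 ≤ d) {δ b t u : ℝ} (hδ : 0 < δ)
    (hb : 0 ≤ b) (ht : δ ≤ t) (hu : 0 ≤ u) (hub : u ≤ b + t) :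
    (t ^ d)⁻¹ ≤ 2 * (δ⁻¹ * (b + 1) + 1) ^ d * (1 + u ^ d)⁻¹ := by
  have ht0 : 0 < t := hδ.trans_le ht
  have htd : 0 < t ^ d := pow_pos ht0 d
  have hud : (0 : ℝ) < 1 + u ^ d := by positivity
  have h := one_add_pow_le d hd hδ hb ht hu hub
  have hC0 : (0 : ℝ) < 2 * (δ⁻¹ * (b + 1) + 1) ^ d := by positivity
  have key : (t ^ d)⁻¹ ≤ 2 * (δ⁻¹ * (b + 1) + 1) ^ d / (1 + u ^ d) := by
    rw [inv_eq_one_div, div_le_div_iff₀ htd hud]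
    nlinarith
  simpa [div_eq_mul_inv] using key

/-- Summing disjoint shell contributions. -/
private lemma shell_sum (d : ℕ) (x₀ : Euc d) (g : Euc d → ℝ)
    (hg_int : Integrable g) (hg_nonneg : ∀ y, 0 ≤ g y) (c₀ δ₀ : ℝ) (hδ₀ : 0 < δ₀) (K : ℕ)
    (hshell : ∀ i : ℕ, i < K →
      c₀ ≤ ∫ y in Metric.closedBall x₀ (δ₀ / 6 ^ i) \
        Metric.closedBall x₀ (δ₀ / 6 ^ i / 6), g y) :
    (K : ℝ) * c₀ ≤ ∫ y, g y := by
  have hrmono : ∀ i j : ℕ, i ≤ j → δ₀ / 6 ^ j ≤ δ₀ / 6 ^ i := by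
    intro i j hij
    apply div_le_div_of_nonneg_left hδ₀.le (pow_pos (by norm_num) i)
    exact pow_le_pow_right₀ (by norm_num) hij
  set A : ℕ → Set (Euc d) := fun i =>
    Metric.closedBall x₀ (δ₀ / 6 ^ i) \ Metric.closedBall x₀ (δ₀ / 6 ^ i / 6) with hA
  have hsucc : ∀ i : ℕ, δ₀ / 6 ^ (i + 1) = δ₀ / 6 ^ i / 6 := by
    intro i; rw [div_div, pow_succ]
  have hAmeas : ∀ i, MeasurableSet (A i) := fun i =>
    measurableSet_closedBall.diff measurableSet_closedBall
  have key : ∀ i j : ℕ, i < j → Disjoint (A i) (A j) := by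
    intro i j hij
    rw [Set.disjoint_left]
    intro y hyi hyj
    apply hyi.2
    have hle : δ₀ / 6 ^ j ≤ δ₀ / 6 ^ i / 6 := by
      rw [← hsucc]; exact hrmono (i + 1) j hij
    exact Metric.closedBall_subset_closedBall hle hyj.1
  have hdisj : (↑(Finset.range K) : Set ℕ).Pairwise (Function.onFun Disjoint A) := by
    intro i _ j _ hij
    rcases lt_or_gt_of_ne hij with h | h
    · exact key i j h
    · exact (key j i h).symm
  have hunion : (∫ y in ⋃ i ∈ Finset.range K, A i, g y) =
      ∑ i ∈ Finset.range K, ∫ y in A i, g y :=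
    integral_biUnion_finset _ (fun i _ => hAmeas i) hdisj (fun i _ => hg_int.integrableOn)
  have h3 : (K : ℝ) * c₀ ≤ ∑ i ∈ Finset.range K, ∫ y in A i, g y := by
    have := Finset.card_nsmul_le_sum (Finset.range K) (fun i => ∫ y in A i, g y) c₀
      (fun i hi => hshell i (Finset.mem_range.1 hi))
    simpa [Finset.card_range, nsmul_eq_mul] using this
  have h2 : (∫ y in ⋃ i ∈ Finset.range K, A i, g y) ≤ ∫ y, g y :=
    setIntegral_le_integral hg_int (ae_of_all _ hg_nonneg)
  linarith [hunion ▸ h3]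

set_option maxHeartbeats 2000000 in
/-- continuity of the extrapolation at a boundary point `x₀ ∈ ∂Ω` with
`ρ(x₀) > 0`: if `ρ` and `f` restricted to `Ω` are continuous at `x₀` and the local solid
angle `ω₀ = lim_{r→0} (1/(V_d·ρ(x₀)·r^d))·∫_{‖x₀−y‖≤r} ρ(y) dy` exists with `ω₀ > 0`, then
`f̂_∞(x) → f(x₀)` as `x → x₀` with `x` outside the closed support of `ρ`. -/
theorem hilbert_extrapolation_boundary_continuity
    (d : ℕ) (hd : 1 ≤ d)
    (ρ : Euc d → ℝ) (hρ_meas : Measurable ρ) (hρ_nonneg : ∀ y, 0 ≤ ρ y)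
    (hρ_prob : (∫ y, ρ y) = 1)
    (hρ_var : Integrable (fun y => ρ y * ‖y‖ ^ 2))
    (f : Euc d → ℝ) (hf_meas : Measurable f)
    (hf_growth : Integrable (fun y => ρ y * |f y| / (1 + ‖y‖ ^ (d : ℝ))))
    (x₀ : Euc d) (hx₀ : x₀ ∈ frontier {y | 0 < ρ y}) (hρx₀ : 0 < ρ x₀)
    (hρ_cont : Tendsto ρ (nhdsWithin x₀ {y | 0 < ρ y}) (nhds (ρ x₀)))
    (hf_cont : Tendsto f (nhdsWithin x₀ {y | 0 < ρ y}) (nhds (f x₀)))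
    (ω₀ : ℝ) (hω₀ : 0 < ω₀)
    (hsolid : Tendsto
      (fun r : ℝ => (∫ y in Metric.closedBall x₀ r, ρ y) / (unitBallVol d * ρ x₀ * r ^ d))
      (nhdsWithin 0 (Set.Ioi 0)) (nhds ω₀)) :
    Tendsto (hilbertExtrapolation d ρ f)
      (nhdsWithin x₀ (closure {y | 0 < ρ y})ᶜ) (nhds (f x₀)) := by
  set Ω : Set (Euc d) := {y | 0 < ρ y} with hΩdef
  set S : Set (Euc d) := closure Ω with hSdef
  set f₀ : ℝ := f x₀ with hf₀def
  -- basic facts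
  have hmemS : ∀ ⦃y⦄, ρ y ≠ 0 → y ∈ S := by
    intro y hy
    rw [hSdef]
    exact subset_closure (show y ∈ Ω from by
      rw [hΩdef]; exact (hρ_nonneg y).lt_of_ne (Ne.symm hy))
  have hdistS : ∀ x, x ∉ S → ∃ δx > 0, ∀ ⦃y⦄, y ∈ S → δx ≤ ‖x - y‖ := by
    intro x hx
    have hop : IsOpen Sᶜ := isClosed_closure.isOpen_compl
    rcases Metric.isOpen_iff.1 hop x hx with ⟨δx, hδx, hball⟩
    refine ⟨δx, hδx, fun y hy => ?_⟩
    by_contra hlt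
    push_neg at hlt
    have : y ∈ Metric.ball x δx := by
      rw [Metric.mem_ball, dist_eq_norm, ← norm_sub_rev]
      exact hlt
    exact hball this hy
  have hker_bd : ∀ x, x ∉ S → ∃ C : ℝ, 0 < C ∧
      ∀ ⦃y⦄, ρ y ≠ 0 → kerH d x y ≤ C * (1 + ‖y‖ ^ d)⁻¹ := by
    intro x hx
    obtain ⟨δx, hδx, hd2⟩ := hdistS x hx
    refine ⟨2 * (δx⁻¹ * (‖x‖ + 1) + 1) ^ d, by positivity, fun y hy => ?_⟩
    have hyb : ‖y‖ ≤ ‖x‖ + ‖x - y‖ := by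
      have h1 : ‖y‖ - ‖x‖ ≤ ‖y - x‖ := norm_sub_norm_le y x
      rw [norm_sub_rev] at h1
      linarith
    exact ker_inv_le d hd hδx (norm_nonneg x) (hd2 (hmemS hy)) (norm_nonneg y) hyb
  have hρ_int : Integrable ρ := by
    by_contra h
    rw [integral_undef h] at hρ_prob
    exact zero_ne_one hρ_prob
  -- the dominating function
  set base : Euc d → ℝ := fun y => ρ y * (|f y| + 1) * (1 + ‖y‖ ^ d)⁻¹ with hbasedef
  have hbase_nonneg : ∀ y, 0 ≤ base y := fun y =>
    mul_nonneg (mul_nonneg (hρ_nonneg y) (by positivity)) (by positivity)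
  have hbase_int : Integrable base := by
    have h1 : Integrable (fun y => ρ y * |f y| * (1 + ‖y‖ ^ d)⁻¹) := by
      have := hf_growth
      simp only [Real.rpow_natCast, div_eq_mul_inv] at this
      exact this
    have h2 : Integrable (fun y => ρ y * (1 + ‖y‖ ^ d)⁻¹) := by
      refine hρ_int.mono' ?_ (ae_of_all _ fun y => ?_)
      · exact (hρ_meas.mul
          ((measurable_const.add (measurable_norm.pow_const d)).inv)).aestronglyMeasurable
      · have h1y : (0 : ℝ) < 1 + ‖y‖ ^ d := by positivity
        have hinv : (1 + ‖y‖ ^ d)⁻¹ ≤ 1 := by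
          have := inv_anti₀ one_pos (le_add_of_nonneg_right (by positivity) : (1 : ℝ) ≤ 1 + ‖y‖ ^ d)
          simpa using this
        rw [Real.norm_eq_abs, abs_of_nonneg (mul_nonneg (hρ_nonneg y) (by positivity))]
        nlinarith [hρ_nonneg y]
    have heq : base = fun y =>
        ρ y * |f y| * (1 + ‖y‖ ^ d)⁻¹ + ρ y * (1 + ‖y‖ ^ d)⁻¹ := by
      funext y; rw [hbasedef]; ring
    rw [heq]
    exact h1.add h2
  -- integrability of all kernel-weighted integrands
  have hInt : ∀ x, x ∉ S → ∀ (g : Euc d → ℝ), Measurable g → ∀ c : ℝ, 0 ≤ c →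
      (∀ y, |g y| ≤ c * (|f y| + 1)) →
      Integrable (fun y => ρ y * g y * kerH d x y) := by
    intro x hx g hg c hc hgb
    obtain ⟨C, hC0, hCb⟩ := hker_bd x hx
    refine (hbase_int.const_mul (c * C)).mono'
      ((hρ_meas.mul hg).mul (kerH_meas d x)).aestronglyMeasurable (ae_of_all _ fun y => ?_)
    rcases eq_or_ne (ρ y) 0 with h0 | h0
    · simp only [h0, zero_mul, norm_zero]
      exact mul_nonneg (mul_nonneg hc hC0.le) (hbase_nonneg y)
    · have hρy : 0 ≤ ρ y := hρ_nonneg y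
      have hkn : 0 ≤ kerH d x y := kerH_nonneg d x y
      have h1 : ρ y * |g y| ≤ ρ y * (c * (|f y| + 1)) :=
        mul_le_mul_of_nonneg_left (hgb y) hρy
      have h2 : ρ y * |g y| * kerH d x y ≤
          (ρ y * (c * (|f y| + 1))) * (C * (1 + ‖y‖ ^ d)⁻¹) :=
        mul_le_mul h1 (hCb h0) hkn (mul_nonneg hρy (by positivity))
      calc ‖ρ y * g y * kerH d x y‖ = ρ y * |g y| * kerH d x y := by
            rw [Real.norm_eq_abs, abs_mul, abs_mul, abs_of_nonneg hρy, abs_of_nonneg hkn]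
        _ ≤ (ρ y * (c * (|f y| + 1))) * (C * (1 + ‖y‖ ^ d)⁻¹) := h2
        _ = c * C * base y := by rw [hbasedef]; ring
  have hI₂ : ∀ x, x ∉ S → Integrable (fun y => ρ y * kerH d x y) := by
    intro x hx
    have := hInt x hx (fun _ => 1) measurable_const 1 zero_le_one
      (fun y => by rw [abs_one, one_mul]; nlinarith [abs_nonneg (f y)])
    simpa using this
  -- the denominator function
  set D : Euc d → ℝ := fun x => ∫ y, ρ y * kerH d x y with hDdef
  -- volume constant positivity
  have hV : 0 < unitBallVol d := by
    rw [unitBallVol]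
    exact div_pos (Real.rpow_pos_of_pos Real.pi_pos _)
      (Real.Gamma_pos_of_pos (by positivity))
  set c : ℝ := unitBallVol d * ρ x₀ with hcdef
  have hc : 0 < c := mul_pos hV hρx₀
  -- solid angle bounds
  obtain ⟨δ', hδ'pos, hδ'⟩ := Metric.tendsto_nhdsWithin_nhds.mp hsolid (ω₀ / 2) (half_pos hω₀)
  set δ₀ : ℝ := δ' / 2 with hδ₀def
  have hδ₀pos : 0 < δ₀ := half_pos hδ'pos
  have hF : ∀ r : ℝ, 0 < r → r ≤ δ₀ →
      ω₀ / 2 * (c * r ^ d) ≤ (∫ y in Metric.closedBall x₀ r, ρ y) ∧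
      (∫ y in Metric.closedBall x₀ r, ρ y) ≤ 3 * ω₀ / 2 * (c * r ^ d) := by
    intro r hr hrle
    have hcd : 0 < c * r ^ d := mul_pos hc (pow_pos hr d)
    have hdist : dist r (0 : ℝ) < δ' := by
      rw [Real.dist_eq, sub_zero, abs_of_pos hr]
      rw [hδ₀def] at hrle
      linarith
    have hh := hδ' (Set.mem_Ioi.2 hr) hdist
    rw [Real.dist_eq] at hh
    have habs := abs_lt.1 hh
    constructor
    · have := (lt_div_iff₀ hcd).1 (show ω₀ / 2 <
        (∫ y in Metric.closedBall x₀ r, ρ y) / (c * r ^ d) by linarith [habs.1])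
      linarith
    · have := (div_lt_iff₀ hcd).1 (show
        (∫ y in Metric.closedBall x₀ r, ρ y) / (c * r ^ d) < 3 * ω₀ / 2 by linarith [habs.2])
      linarith
  set c₀ : ℝ := ω₀ / 4 * c / 2 ^ d with hc₀def
  have hc₀ : 0 < c₀ := div_pos (mul_pos (by linarith) hc) (by positivity)
  -- the shell estimate
  have hshell : ∀ r : ℝ, 0 < r → r ≤ δ₀ → ∀ x, x ∉ S → ‖x - x₀‖ ≤ r →
      c₀ ≤ ∫ y in Metric.closedBall x₀ r \ Metric.closedBall x₀ (r / 6),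
        ρ y * kerH d x y := by
    intro r hr hrle x hx hxr
    have hr6 : 0 < r / 6 := by linarith
    have hsub6 : Metric.closedBall x₀ (r / 6) ⊆ Metric.closedBall x₀ r :=
      Metric.closedBall_subset_closedBall (by linarith)
    have hmass : ω₀ / 4 * (c * r ^ d) ≤
        ∫ y in Metric.closedBall x₀ r \ Metric.closedBall x₀ (r / 6), ρ y := by
      rw [integral_diff measurableSet_closedBall hρ_int.integrableOn hsub6]
      have h1 := (hF r hr hrle).1
      have h2 := (hF (r / 6) hr6 (by linarith)).2
      have h6 : (r / 6) ^ d ≤ r ^ d / 6 := by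
        rw [div_pow]
        apply div_le_div_of_nonneg_left (by positivity) (by norm_num)
        exact le_self_pow₀ (by norm_num) (by omega)
      nlinarith [mul_le_mul_of_nonneg_left h6
        (mul_nonneg (by linarith : (0:ℝ) ≤ 3 * ω₀ / 2) hc.le), pow_pos hr d]
    have hptw : ∀ y ∈ Metric.closedBall x₀ r \ Metric.closedBall x₀ (r / 6),
        ρ y * ((2 * r) ^ d)⁻¹ ≤ ρ y * kerH d x y := by
      intro y hy
      rcases eq_or_ne (ρ y) 0 with h0 | h0
      · simp [h0]
      · have hyS : y ∈ S := hmemS h0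
        have hxy : x ≠ y := fun h => hx (h ▸ hyS)
        have hpos : 0 < ‖x - y‖ := by
          rw [norm_pos_iff]
          exact sub_ne_zero_of_ne hxy
        have hyball : dist y x₀ ≤ r := hy.1
        have hle2r : ‖x - y‖ ≤ 2 * r := by
          have h1 : ‖x - y‖ ≤ ‖x - x₀‖ + ‖y - x₀‖ := by
            have := norm_sub_le (x - x₀) (y - x₀)
            rwa [sub_sub_sub_cancel_right] at this
          have h2 : ‖y - x₀‖ = dist y x₀ := (dist_eq_norm y x₀).symm
          linarith
        have hk : ((2 * r) ^ d)⁻¹ ≤ kerH d x y := by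
          rw [kerH]
          exact inv_anti₀ (pow_pos hpos d) (pow_le_pow_left₀ (norm_nonneg _) hle2r d)
        exact mul_le_mul_of_nonneg_left hk (hρ_nonneg y)
    have hint1 : IntegrableOn (fun y => ρ y * ((2 * r) ^ d)⁻¹)
        (Metric.closedBall x₀ r \ Metric.closedBall x₀ (r / 6)) volume :=
      (hρ_int.mul_const _).integrableOn
    have hint2 : IntegrableOn (fun y => ρ y * kerH d x y)
        (Metric.closedBall x₀ r \ Metric.closedBall x₀ (r / 6)) volume :=
      (hI₂ x hx).integrableOn
    have hmono := setIntegral_mono_on hint1 hint2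
      (measurableSet_closedBall.diff measurableSet_closedBall) hptw
    rw [integral_mul_const] at hmono
    have hrd : (0:ℝ) < r ^ d := pow_pos hr d
    calc c₀ = ω₀ / 4 * (c * r ^ d) * ((2 * r) ^ d)⁻¹ := by
          rw [hc₀def, mul_pow]
          field_simp
      _ ≤ (∫ y in Metric.closedBall x₀ r \ Metric.closedBall x₀ (r / 6), ρ y) *
            ((2 * r) ^ d)⁻¹ := mul_le_mul_of_nonneg_right hmass (by positivity)
      _ ≤ _ := hmono
  -- divergence of the denominator
  have hDtop : Tendsto D (nhdsWithin x₀ Sᶜ) atTop := by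
    rw [tendsto_atTop]
    intro M
    obtain ⟨K, hK⟩ := exists_nat_ge (M / c₀)
    have hKc : M ≤ (K : ℝ) * c₀ := (div_le_iff₀ hc₀).1 hK
    have hτ : 0 < δ₀ / 6 ^ K := by positivity
    have hball : ∀ᶠ x in nhdsWithin x₀ Sᶜ, dist x x₀ ≤ δ₀ / 6 ^ K := by
      apply Eventually.filter_mono nhdsWithin_le_nhds
      filter_upwards [Metric.closedBall_mem_nhds x₀ hτ] with x hx
      exact Metric.mem_closedBall.1 hx
    filter_upwards [hball, eventually_mem_nhdsWithin] with x hxτ hxS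
    have happ : (K : ℝ) * c₀ ≤ ∫ y, ρ y * kerH d x y := by
      apply shell_sum d x₀ _ (hI₂ x hxS)
        (fun y => mul_nonneg (hρ_nonneg y) (kerH_nonneg d x y)) c₀ δ₀ hδ₀pos K
      intro i hi
      have hri : (0:ℝ) < δ₀ / 6 ^ i := by positivity
      have hrlei : δ₀ / 6 ^ i ≤ δ₀ := by
        apply div_le_self hδ₀pos.le
        exact one_le_pow₀ (by norm_num)
      apply hshell _ hri hrlei x hxS
      have hmon : δ₀ / 6 ^ K ≤ δ₀ / 6 ^ i := by
        apply div_le_div_of_nonneg_left hδ₀pos.le (pow_pos (by norm_num) i)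
        exact pow_le_pow_right₀ (by norm_num) hi.le
      rw [← dist_eq_norm]
      linarith
    calc M ≤ (K : ℝ) * c₀ := hKc
      _ ≤ ∫ y, ρ y * kerH d x y := happ
      _ = D x := by simp only [hDdef]
  -- main argument
  rw [Metric.tendsto_nhds]
  intro ε hε
  obtain ⟨δ₁, hδ₁pos, hδ₁⟩ := Metric.tendsto_nhdsWithin_nhds.mp hf_cont (ε / 3) (by positivity)
  set δB : ℝ := δ₁ / 2 with hδBdef
  have hδBpos : 0 < δB := half_pos hδ₁pos
  set C₁ : ℝ := 2 * (δB⁻¹ * (‖x₀‖ + 1) + 1) ^ d with hC₁def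
  have hC₁ : 0 < C₁ := by rw [hC₁def]; positivity
  set G : Euc d → ℝ := fun y => 2 ^ d * C₁ * (|f₀| + 1) * base y with hGdef
  have hG_int : Integrable G := hbase_int.const_mul _
  have hG_nonneg : ∀ y, 0 ≤ G y := fun y =>
    mul_nonneg (by positivity) (hbase_nonneg y)
  set M : ℝ := ∫ y, G y with hMdef
  have hM0 : 0 ≤ M := integral_nonneg hG_nonneg
  have hDev := hDtop.eventually (eventually_ge_atTop (max 1 (3 * (M + 1) / ε)))
  have hnearx : ∀ᶠ x in nhdsWithin x₀ Sᶜ, dist x x₀ < δB / 2 := by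
    apply Eventually.filter_mono nhdsWithin_le_nhds
    filter_upwards [Metric.ball_mem_nhds x₀ (by positivity : (0:ℝ) < δB / 2)] with x hx
    exact Metric.mem_ball.1 hx
  filter_upwards [hDev, hnearx, eventually_mem_nhdsWithin] with x hDx hxnear hxS
  -- fixed x: integrability
  have Ix₁ : Integrable (fun y => ρ y * f y * kerH d x y) :=
    hInt x hxS f hf_meas 1 zero_le_one (fun y => by
      rw [one_mul]; nlinarith [abs_nonneg (f y)])
  have Ix₂ : Integrable (fun y => ρ y * kerH d x y) := hI₂ x hxS
  have Ix₃ : Integrable (fun y => ρ y * |f y - f₀| * kerH d x y) := by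
    apply hInt x hxS (fun y => |f y - f₀|) (hf_meas.sub measurable_const).abs
      (|f₀| + 1) (by positivity)
    intro y
    rw [abs_abs]
    have h1 : |f y - f₀| ≤ |f y| + |f₀| := by
      have := abs_add_le (f y) (-f₀)
      simpa [sub_eq_add_neg] using this
    nlinarith [abs_nonneg (f y), abs_nonneg f₀]
  set Nx : ℝ := ∫ y, ρ y * f y * kerH d x y with hNxdef
  have hDx1 : 1 ≤ D x := le_trans (le_max_left _ _) hDx
  have hDxq : 3 * (M + 1) / ε ≤ D x := le_trans (le_max_right _ _) hDx
  have hDpos : 0 < D x := lt_of_lt_of_le one_pos hDx1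
  -- rewrite the extrapolation function
  have hkrw : ∀ y : Euc d, ‖x - y‖ ^ (-(d : ℝ)) = kerH d x y := by
    intro y
    rw [kerH]
    exact ker_rpow_eq d hd _ (norm_nonneg _)
  have hEeq : hilbertExtrapolation d ρ f x = Nx / D x := by
    rw [hilbertExtrapolation]
    simp only [hNxdef, hDdef, hkrw]
  rw [hEeq]
  -- the key bound
  have e1 : Nx - f₀ * D x = ∫ y, ρ y * (f y - f₀) * kerH d x y := by
    simp only [hNxdef, hDdef]
    rw [← integral_const_mul f₀ (fun y => ρ y * kerH d x y),
      ← integral_sub Ix₁ (Ix₂.const_mul f₀)]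
    congr 1
    funext y
    ring
  have e2 : |Nx - f₀ * D x| ≤ ∫ y, ρ y * |f y - f₀| * kerH d x y := by
    rw [e1]
    have h := norm_integral_le_integral_norm (μ := volume) (fun y => ρ y * (f y - f₀) * kerH d x y)
    rw [Real.norm_eq_abs] at h
    refine h.trans (le_of_eq (integral_congr_ae (ae_of_all _ fun y => ?_)))
    show ‖ρ y * (f y - f₀) * kerH d x y‖ = ρ y * |f y - f₀| * kerH d x y
    rw [Real.norm_eq_abs, abs_mul, abs_mul, abs_of_nonneg (hρ_nonneg y),
      abs_of_nonneg (kerH_nonneg d x y)]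
  have hsplit : (∫ y, ρ y * |f y - f₀| * kerH d x y) =
      (∫ y in Metric.closedBall x₀ δB, ρ y * |f y - f₀| * kerH d x y) +
      (∫ y in (Metric.closedBall x₀ δB)ᶜ, ρ y * |f y - f₀| * kerH d x y) :=
    (integral_add_compl measurableSet_closedBall Ix₃).symm
  have hnear : (∫ y in Metric.closedBall x₀ δB, ρ y * |f y - f₀| * kerH d x y) ≤
      ε / 3 * D x := by
    have step1 : (∫ y in Metric.closedBall x₀ δB, ρ y * |f y - f₀| * kerH d x y) ≤
        ∫ y in Metric.closedBall x₀ δB, ε / 3 * (ρ y * kerH d x y) := by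
      apply setIntegral_mono_on Ix₃.integrableOn ((Ix₂.const_mul (ε / 3)).integrableOn)
        measurableSet_closedBall
      intro y hy
      rcases eq_or_ne (ρ y) 0 with h0 | h0
      · simp [h0]
      · have hyΩ : y ∈ Ω := by
          rw [hΩdef]; exact (hρ_nonneg y).lt_of_ne (Ne.symm h0)
        have hyd : dist y x₀ < δ₁ := by
          have := Metric.mem_closedBall.1 hy
          rw [hδBdef] at this
          linarith
        have hfy := hδ₁ hyΩ hyd
        rw [Real.dist_eq] at hfy
        calc ρ y * |f y - f₀| * kerH d x y ≤ ρ y * (ε / 3) * kerH d x y :=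
              mul_le_mul_of_nonneg_right
                (mul_le_mul_of_nonneg_left hfy.le (hρ_nonneg y)) (kerH_nonneg d x y)
          _ = ε / 3 * (ρ y * kerH d x y) := by ring
    have step2 : (∫ y in Metric.closedBall x₀ δB, ε / 3 * (ρ y * kerH d x y)) ≤
        ε / 3 * D x := by
      rw [integral_const_mul]
      apply mul_le_mul_of_nonneg_left _ (by positivity : (0:ℝ) ≤ ε / 3)
      simp only [hDdef]
      exact setIntegral_le_integral Ix₂
        (ae_of_all _ fun y => mul_nonneg (hρ_nonneg y) (kerH_nonneg d x y))
    linarith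
  have hfar : (∫ y in (Metric.closedBall x₀ δB)ᶜ, ρ y * |f y - f₀| * kerH d x y) ≤ M := by
    have step1 : (∫ y in (Metric.closedBall x₀ δB)ᶜ, ρ y * |f y - f₀| * kerH d x y) ≤
        ∫ y in (Metric.closedBall x₀ δB)ᶜ, G y := by
      apply setIntegral_mono_on Ix₃.integrableOn hG_int.integrableOn
        measurableSet_closedBall.compl
      intro y hy
      have hyd : δB < dist y x₀ := by
        by_contra hcon
        push_neg at hcon
        exact hy (Metric.mem_closedBall.2 hcon)
      have hyx : ‖y - x₀‖ = dist y x₀ := (dist_eq_norm y x₀).symm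
      have hxx₀ : ‖x - x₀‖ = dist x x₀ := (dist_eq_norm x x₀).symm
      have htri : ‖y - x₀‖ ≤ ‖y - x‖ + ‖x - x₀‖ := by
        have := norm_sub_le (y - x) (x₀ - x)
        rw [sub_sub_sub_cancel_right] at this
        rw [show ‖x₀ - x‖ = ‖x - x₀‖ from norm_sub_rev x₀ x] at this
        exact this
      have hxy2 : ‖y - x₀‖ / 2 ≤ ‖x - y‖ := by
        rw [show ‖y - x‖ = ‖x - y‖ from norm_sub_rev y x] at htri
        rw [hyx] at *
        linarith [hxnear]
      have hxypos : 0 < ‖y - x₀‖ / 2 := by rw [hyx]; linarith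
      have hker1 : kerH d x y ≤ ((‖y - x₀‖ / 2) ^ d)⁻¹ := by
        rw [kerH]
        exact inv_anti₀ (pow_pos hxypos d) (pow_le_pow_left₀ hxypos.le hxy2 d)
      have hker2 : ((‖y - x₀‖ / 2) ^ d)⁻¹ = 2 ^ d * (‖y - x₀‖ ^ d)⁻¹ := by
        rw [div_pow, inv_div]
        ring
      have hker3 : (‖y - x₀‖ ^ d)⁻¹ ≤ C₁ * (1 + ‖y‖ ^ d)⁻¹ := by
        rw [hC₁def]
        apply ker_inv_le d hd hδBpos (norm_nonneg x₀)
          (by rw [hyx]; linarith : δB ≤ ‖y - x₀‖) (norm_nonneg y)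
        have h1 : ‖y‖ - ‖x₀‖ ≤ ‖y - x₀‖ := norm_sub_norm_le y x₀
        linarith
      have hkerG : kerH d x y ≤ 2 ^ d * (C₁ * (1 + ‖y‖ ^ d)⁻¹) := by
        calc kerH d x y ≤ ((‖y - x₀‖ / 2) ^ d)⁻¹ := hker1
          _ = 2 ^ d * (‖y - x₀‖ ^ d)⁻¹ := hker2
          _ ≤ 2 ^ d * (C₁ * (1 + ‖y‖ ^ d)⁻¹) :=
              mul_le_mul_of_nonneg_left hker3 (by positivity)
      have hfbd : |f y - f₀| ≤ (|f₀| + 1) * (|f y| + 1) := by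
        have h1 : |f y - f₀| ≤ |f y| + |f₀| := by
          have := abs_add_le (f y) (-f₀)
          simpa [sub_eq_add_neg] using this
        nlinarith [abs_nonneg (f y), abs_nonneg f₀]
      have key : ρ y * |f y - f₀| * kerH d x y ≤
          (ρ y * ((|f₀| + 1) * (|f y| + 1))) * (2 ^ d * (C₁ * (1 + ‖y‖ ^ d)⁻¹)) :=
        mul_le_mul (mul_le_mul_of_nonneg_left hfbd (hρ_nonneg y)) hkerG
          (kerH_nonneg d x y) (mul_nonneg (hρ_nonneg y) (by positivity))
      calc ρ y * |f y - f₀| * kerH d x y ≤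
            (ρ y * ((|f₀| + 1) * (|f y| + 1))) * (2 ^ d * (C₁ * (1 + ‖y‖ ^ d)⁻¹)) := key
        _ = G y := by rw [hGdef, hbasedef]; ring
    have step2 : (∫ y in (Metric.closedBall x₀ δB)ᶜ, G y) ≤ M := by
      rw [hMdef]
      exact setIntegral_le_integral hG_int (ae_of_all _ hG_nonneg)
    linarith
  -- put everything together
  have hNfD : |Nx - f₀ * D x| ≤ ε / 3 * D x + M := by
    calc |Nx - f₀ * D x| ≤ ∫ y, ρ y * |f y - f₀| * kerH d x y := e2
      _ = _ + _ := hsplit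
      _ ≤ ε / 3 * D x + M := add_le_add hnear hfar
  rw [Real.dist_eq]
  have e : Nx / D x - f₀ = (Nx - f₀ * D x) / D x := by
    field_simp
  rw [e, abs_div, abs_of_pos hDpos, div_lt_iff₀ hDpos]
  have hMεD : M + 1 ≤ ε / 3 * D x := by
    have h1 : ε / 3 * (3 * (M + 1) / ε) ≤ ε / 3 * D x :=
      mul_le_mul_of_nonneg_left hDxq (by positivity)
    have h2 : ε / 3 * (3 * (M + 1) / ε) = M + 1 := by
      field_simp
    linarith
  calc |Nx - f₀ * D x| ≤ ε / 3 * D x + M := hNfD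
    _ ≤ ε / 3 * D x + ε / 3 * D x := by linarith
    _ < ε * D x := by nlinarith
end
end

section
/- Let E > 0, D > 0, and let t_1 satisfy 0 < t_1 < D/3, so that t ↦ t·ln(D/t) is positive and strictly increasing on (0, t_1]. Then the integral I_n = ∫_0^{t_1} exp(−n·E·t·ln(D/t)) dt satisfies I_n ~ 1/(E·n·ln n) as n → ∞, i.e. lim_{n→∞} E·n·ln(n)·I_n = 1. -/
open MeasureTheory Filter
set_option maxHeartbeats 1000000

lemma integral_exp_neg_mul (k a b : ℝ) (hk : k ≠ 0) :
    ∫ t in a..b, Real.exp (-(k * t)) =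
      (Real.exp (-(k * a)) - Real.exp (-(k * b))) / k := by
  have h : ∀ t ∈ Set.uIcc a b,
      HasDerivAt (fun t => -Real.exp (-(k * t)) / k) (Real.exp (-(k * t))) t := by
    intro t _
    have h1 : HasDerivAt (fun t : ℝ => -(k * t)) (-k) t := by
      have h0 := ((hasDerivAt_id t).const_mul k).neg
      rw [mul_one] at h0
      exact h0
    have h2 : HasDerivAt (fun t : ℝ => Real.exp (-(k * t)))
        (Real.exp (-(k * t)) * (-k)) t := (Real.hasDerivAt_exp _).comp t h1
    have h3 := (h2.div_const k).neg
    have h4 : (fun t : ℝ => -Real.exp (-(k * t)) / k) = fun x => -(Real.exp (-(k * x)) / k) := by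
      funext x; ring
    rw [h4]
    refine h3.congr_deriv ?_
    rw [mul_neg, neg_div, neg_neg, mul_div_assoc, div_self hk, mul_one]
  rw [intervalIntegral.integral_eq_sub_of_hasDerivAt h
    ((Real.continuous_exp.comp (by continuity)).intervalIntegrable a b)]
  ring

lemma exponent_nonneg {K D t₁ t : ℝ} (hK : 0 ≤ K) (hD3 : 3 * t₁ < D)
    (h0 : 0 ≤ t) (h1 : t ≤ t₁) : 0 ≤ K * t * Real.log (D / t) := by
  rcases eq_or_lt_of_le h0 with h | h
  · simp [← h]
  · have ht₁ : 0 < t₁ := lt_of_lt_of_le h h1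
    have hD1 : 1 < D / t := by
      rw [lt_div_iff₀ h]; nlinarith
    have := Real.log_pos hD1
    positivity

lemma intInt (K D t₁ a b : ℝ) (hK : 0 ≤ K) (hD3 : 3 * t₁ < D)
    (h0a : 0 ≤ a) (hab : a ≤ b) (hb : b ≤ t₁) :
    IntervalIntegrable (fun t => Real.exp (-(K * t * Real.log (D / t)))) volume a b := by
  rw [intervalIntegrable_iff_integrableOn_Ioc_of_le hab]
  apply Measure.integrableOn_of_bounded (M := 1) measure_Ioc_lt_top.ne
  · apply Measurable.aestronglyMeasurable
    exact (((measurable_const.mul measurable_id).mul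
      (Real.measurable_log.comp (measurable_const.div measurable_id))).neg).exp
  · filter_upwards [ae_restrict_mem measurableSet_Ioc] with t ht
    rw [Real.norm_eq_abs, abs_of_pos (Real.exp_pos _), Real.exp_le_one_iff]
    have := exponent_nonneg hK hD3 (le_of_lt (h0a.trans_lt ht.1)) (ht.2.trans hb)
    linarith

noncomputable def lapL (D N : ℝ) : ℝ := Real.log (D * (N * Real.log N ^ 2))
noncomputable def lapM (D N : ℝ) : ℝ := Real.log (D * N / Real.log N ^ 2)

noncomputable def lapLower (E D t₁ N : ℝ) : ℝ :=
  Real.log N / lapL D N *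
    (Real.exp (-(E * lapL D N / Real.log N ^ 2)) - Real.exp (-(N * E * t₁ * lapL D N)))

noncomputable def lapUpper (E D t₁ N : ℝ) : ℝ :=
  E / Real.log N + Real.log N / lapM D N +
    E * N * Real.log N * t₁ * Real.exp (-(E * Real.log N ^ 2 * Real.log (D / t₁)))

lemma one_lt_log_of (D x : ℝ) (hx : 0 < x) (h3 : 3 ≤ D / x) : 1 < Real.log (D / x) := by
  have hDx : 0 < D / x := lt_of_lt_of_le (by norm_num) h3
  rw [Real.lt_log_iff_exp_lt hDx]
  have := Real.exp_one_lt_d9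
  linarith [h3, this]

lemma lap_lower_le (E D t₁ N : ℝ) (hE : 0 < E) (hD : 0 < D) (ht₁ : 0 < t₁) (ht₁D : t₁ < D / 3)
    (hN1 : 1 ≤ N) (hLn2 : 2 ≤ Real.log N) (hdt : Real.log N ^ 2 / N ≤ t₁) :
    lapLower E D t₁ N ≤
      E * N * Real.log N * ∫ t in (0:ℝ)..t₁, Real.exp (-(N * E * t * Real.log (D / t))) := by
  have hN0 : 0 < N := lt_of_lt_of_le one_pos hN1
  have hLn0 : 0 < Real.log N := lt_of_lt_of_le two_pos hLn2
  have hD3 : 3 * t₁ < D := by rw [lt_div_iff₀ (by norm_num : (0:ℝ) < 3)] at ht₁D; linarith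
  set c := 1 / (N * Real.log N ^ 2) with hc
  have hc0 : 0 < c := by positivity
  have hcd : c ≤ Real.log N ^ 2 / N := by
    rw [hc, div_le_div_iff₀ (by positivity) hN0]
    have hsq : 4 ≤ Real.log N ^ 2 := by nlinarith
    have h1 : 4 * N ≤ Real.log N ^ 2 * N := mul_le_mul_of_nonneg_right hsq hN0.le
    have h2 : (Real.log N ^ 2 * N) * 4 ≤ (Real.log N ^ 2 * N) * (Real.log N ^ 2) :=
      mul_le_mul_of_nonneg_left hsq (by positivity)
    nlinarith
  have hct : c ≤ t₁ := hcd.trans hdt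
  have hDc : D / c = D * (N * Real.log N ^ 2) := by rw [hc]; field_simp
  have hLdef : lapL D N = Real.log (D / c) := by rw [lapL, hDc]
  have hL1 : 1 < lapL D N := by
    rw [hLdef]
    apply one_lt_log_of D c hc0
    rw [le_div_iff₀ hc0]; nlinarith
  have hL0 : 0 < lapL D N := lt_trans one_pos hL1
  set k := N * E * lapL D N with hk
  have hk0 : 0 < k := by rw [hk]; positivity
  have hi1 := intInt (N*E) D t₁ 0 c (by positivity) hD3 le_rfl hc0.le hct
  have hi2 := intInt (N*E) D t₁ c t₁ (by positivity) hD3 hc0.le hct le_rfl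
  have hsplit := intervalIntegral.integral_add_adjacent_intervals hi1 hi2
  have h0c : 0 ≤ ∫ t in (0:ℝ)..c, Real.exp (-(N*E*t*Real.log (D/t))) :=
    intervalIntegral.integral_nonneg hc0.le (fun t _ => (Real.exp_pos _).le)
  have hg : Continuous fun t : ℝ => Real.exp (-(k*t)) := by continuity
  have hmono : ∫ t in c..t₁, Real.exp (-(k*t)) ≤
      ∫ t in c..t₁, Real.exp (-(N*E*t*Real.log (D/t))) := by
    apply intervalIntegral.integral_mono_on hct (hg.intervalIntegrable _ _) hi2
    intro t ht
    have ht0 : 0 < t := lt_of_lt_of_le hc0 ht.1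
    have hlog : Real.log (D/t) ≤ lapL D N := by
      rw [hLdef]
      apply Real.log_le_log (by positivity)
      gcongr
      exact ht.1
    rw [Real.exp_le_exp]
    have hNEt : 0 ≤ N*E*t := by positivity
    have h1 : N*E*t*Real.log (D/t) ≤ N*E*t*lapL D N := mul_le_mul_of_nonneg_left hlog hNEt
    have h2 : N*E*t*lapL D N = k*t := by rw [hk]; ring
    linarith
  have hval := integral_exp_neg_mul k c t₁ hk0.ne'
  have e1 : k*c = E * lapL D N / Real.log N ^ 2 := by
    rw [hk, hc]; field_simp
  have e2 : k*t₁ = N*E*t₁*lapL D N := by rw [hk]; ring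
  have key : lapLower E D t₁ N =
      E*N*Real.log N * ((Real.exp (-(k*c)) - Real.exp (-(k*t₁)))/k) := by
    simp only [lapLower]
    rw [← e1, ← e2, hk]
    field_simp
  calc lapLower E D t₁ N
      = E*N*Real.log N * ((Real.exp (-(k*c)) - Real.exp (-(k*t₁)))/k) := key
    _ = E*N*Real.log N * ∫ t in c..t₁, Real.exp (-(k*t)) := by rw [hval]
    _ ≤ E*N*Real.log N * ∫ t in c..t₁, Real.exp (-(N*E*t*Real.log (D/t))) :=
        mul_le_mul_of_nonneg_left hmono (by positivity)
    _ ≤ E*N*Real.log N * ((∫ t in (0:ℝ)..c, Real.exp (-(N*E*t*Real.log (D/t)))) +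
          ∫ t in c..t₁, Real.exp (-(N*E*t*Real.log (D/t)))) :=
        mul_le_mul_of_nonneg_left (le_add_of_nonneg_left h0c) (by positivity)
    _ = E*N*Real.log N * ∫ t in (0:ℝ)..t₁, Real.exp (-(N*E*t*Real.log (D/t))) := by
        rw [hsplit]

lemma lap_upper_le (E D t₁ N : ℝ) (hE : 0 < E) (hD : 0 < D) (ht₁ : 0 < t₁) (ht₁D : t₁ < D / 3)
    (hN1 : 1 ≤ N) (hLn2 : 2 ≤ Real.log N) (hdt : Real.log N ^ 2 / N ≤ t₁) :
    E * N * Real.log N * (∫ t in (0:ℝ)..t₁, Real.exp (-(N * E * t * Real.log (D / t)))) ≤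
      lapUpper E D t₁ N := by
  have hN0 : 0 < N := lt_of_lt_of_le one_pos hN1
  have hLn0 : 0 < Real.log N := lt_of_lt_of_le two_pos hLn2
  have hD3 : 3 * t₁ < D := by rw [lt_div_iff₀ (by norm_num : (0:ℝ) < 3)] at ht₁D; linarith
  set c := 1 / (N * Real.log N ^ 2) with hc
  set d := Real.log N ^ 2 / N with hd
  have hc0 : 0 < c := by positivity
  have hd0 : 0 < d := by positivity
  have hcd : c ≤ d := by
    rw [hc, hd, div_le_div_iff₀ (by positivity) hN0]
    have hsq : 4 ≤ Real.log N ^ 2 := by nlinarith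
    have h1 : 4 * N ≤ Real.log N ^ 2 * N := mul_le_mul_of_nonneg_right hsq hN0.le
    have h2 : (Real.log N ^ 2 * N) * 4 ≤ (Real.log N ^ 2 * N) * (Real.log N ^ 2) :=
      mul_le_mul_of_nonneg_left hsq (by positivity)
    nlinarith
  have hct : c ≤ t₁ := hcd.trans hdt
  have hDd : D / d = D * N / Real.log N ^ 2 := by rw [hd]; field_simp
  have hMdef : lapM D N = Real.log (D / d) := by rw [lapM, hDd]
  have hM1 : 1 < lapM D N := by
    rw [hMdef]
    apply one_lt_log_of D d hd0
    rw [le_div_iff₀ hd0]; nlinarith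
  have hM0 : 0 < lapM D N := lt_trans one_pos hM1
  set k := N * E * lapM D N with hk
  have hk0 : 0 < k := by rw [hk]; positivity
  have hi1 := intInt (N*E) D t₁ 0 c (by positivity) hD3 le_rfl hc0.le hct
  have hi2 := intInt (N*E) D t₁ c d (by positivity) hD3 hc0.le hcd hdt
  have hi3 := intInt (N*E) D t₁ d t₁ (by positivity) hD3 hd0.le hdt le_rfl
  have hsplit2 := intervalIntegral.integral_add_adjacent_intervals hi2 hi3
  have hi23 := hi2.trans hi3
  have hsplit1 := intervalIntegral.integral_add_adjacent_intervals hi1 hi23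
  -- piece 1
  have hp1 : ∫ t in (0:ℝ)..c, Real.exp (-(N*E*t*Real.log (D/t))) ≤ c := by
    have := intervalIntegral.integral_mono_on hc0.le hi1
      (intervalIntegrable_const (c := (1:ℝ)))
      (fun t ht => by
        rw [Real.exp_le_one_iff, neg_nonpos]
        exact exponent_nonneg (by positivity) hD3 ht.1 (ht.2.trans hct))
    simpa using this
  -- piece 2
  have hg : Continuous fun t : ℝ => Real.exp (-(k*t)) := by continuity
  have hp2 : ∫ t in c..d, Real.exp (-(N*E*t*Real.log (D/t))) ≤ 1 / k := by
    have hmono : ∫ t in c..d, Real.exp (-(N*E*t*Real.log (D/t))) ≤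
        ∫ t in c..d, Real.exp (-(k*t)) := by
      apply intervalIntegral.integral_mono_on hcd hi2 (hg.intervalIntegrable _ _)
      intro t ht
      have ht0 : 0 < t := lt_of_lt_of_le hc0 ht.1
      have hlog : lapM D N ≤ Real.log (D/t) := by
        rw [hMdef]
        apply Real.log_le_log (by positivity)
        gcongr
        exact ht.2
      rw [Real.exp_le_exp]
      have hNEt : 0 ≤ N*E*t := by positivity
      have h1 : N*E*t*lapM D N ≤ N*E*t*Real.log (D/t) := mul_le_mul_of_nonneg_left hlog hNEt
      have h2 : N*E*t*lapM D N = k*t := by rw [hk]; ring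
      linarith
    have hval := integral_exp_neg_mul k c d hk0.ne'
    have hb : (Real.exp (-(k*c)) - Real.exp (-(k*d))) / k ≤ 1 / k := by
      gcongr
      have h1 : Real.exp (-(k*c)) ≤ 1 := by
        rw [Real.exp_le_one_iff, neg_nonpos]
        positivity
      nlinarith [Real.exp_pos (-(k*d))]
    calc ∫ t in c..d, Real.exp (-(N*E*t*Real.log (D/t)))
        ≤ ∫ t in c..d, Real.exp (-(k*t)) := hmono
      _ = (Real.exp (-(k*c)) - Real.exp (-(k*d))) / k := hval
      _ ≤ 1 / k := hb
  -- piece 3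
  have hlt₁0 : 0 ≤ Real.log (D/t₁) := by
    have := one_lt_log_of D t₁ ht₁ (by rw [le_div_iff₀ ht₁]; linarith)
    linarith
  have hp3 : ∫ t in d..t₁, Real.exp (-(N*E*t*Real.log (D/t))) ≤
      (t₁ - d) * Real.exp (-(N*E*d*Real.log (D/t₁))) := by
    have hm := intervalIntegral.integral_mono_on hdt hi3
      (intervalIntegrable_const (c := Real.exp (-(N*E*d*Real.log (D/t₁)))))
      (fun t ht => by
        have ht0 : 0 < t := lt_of_lt_of_le hd0 ht.1
        have l1 : Real.log (D/t₁) ≤ Real.log (D/t) := by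
          apply Real.log_le_log (by positivity)
          gcongr
          exact ht.2
        have l2 : d * Real.log (D/t₁) ≤ t * Real.log (D/t) :=
          mul_le_mul ht.1 l1 hlt₁0 ht0.le
        have l3 := mul_le_mul_of_nonneg_left l2 (le_of_lt (mul_pos hN0 hE))
        rw [Real.exp_le_exp]
        nlinarith)
    simpa [smul_eq_mul] using hm
  -- assembly
  have hC0 : 0 ≤ Real.exp (-(N*E*d*Real.log (D/t₁))) := (Real.exp_pos _).le
  have i1 : E * N * Real.log N * c = E / Real.log N := by
    rw [hc]; field_simp
  have i2 : E * N * Real.log N * (1/k) = Real.log N / lapM D N := by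
    rw [hk]; field_simp
  have i3 : N*E*d*Real.log (D/t₁) = E * Real.log N ^ 2 * Real.log (D/t₁) := by
    rw [hd]; field_simp
  have hfac : (0:ℝ) ≤ E * N * Real.log N := by positivity
  calc E * N * Real.log N * (∫ t in (0:ℝ)..t₁, Real.exp (-(N * E * t * Real.log (D / t))))
      = E * N * Real.log N *
        ((∫ t in (0:ℝ)..c, Real.exp (-(N*E*t*Real.log (D/t)))) +
          ((∫ t in c..d, Real.exp (-(N*E*t*Real.log (D/t)))) +
            ∫ t in d..t₁, Real.exp (-(N*E*t*Real.log (D/t))))) := by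
        rw [hsplit2, hsplit1]
    _ ≤ E * N * Real.log N *
        (c + (1/k + (t₁ - d) * Real.exp (-(N*E*d*Real.log (D/t₁))))) :=
        mul_le_mul_of_nonneg_left (add_le_add hp1 (add_le_add hp2 hp3)) hfac
    _ ≤ E * N * Real.log N *
        (c + (1/k + t₁ * Real.exp (-(N*E*d*Real.log (D/t₁))))) := by
        apply mul_le_mul_of_nonneg_left _ hfac
        have : (t₁ - d) * Real.exp (-(N*E*d*Real.log (D/t₁))) ≤
            t₁ * Real.exp (-(N*E*d*Real.log (D/t₁))) :=
          mul_le_mul_of_nonneg_right (by linarith) hC0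
        linarith
    _ = lapUpper E D t₁ N := by
        simp only [lapUpper]
        rw [mul_add, mul_add, i1, i2, i3]
        ring

lemma lap_L_div_log (D : ℝ) (hD : 0 < D) :
    Tendsto (fun N => lapL D N / Real.log N) atTop (nhds 1) := by
  have A := Real.tendsto_log_atTop
  have hlog : Tendsto (fun x : ℝ => Real.log x / x) atTop (nhds 0) :=
    Real.isLittleO_log_id_atTop.tendsto_div_nhds_zero
  have h1 : Tendsto (fun N : ℝ => Real.log D / Real.log N) atTop (nhds 0) :=
    tendsto_const_nhds.div_atTop A
  have h2 : Tendsto (fun N : ℝ => Real.log (Real.log N) / Real.log N) atTop (nhds 0) :=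
    hlog.comp A
  have hone : Tendsto (fun _ : ℝ => (1:ℝ)) atTop (nhds 1) := tendsto_const_nhds
  have hLL : Tendsto (fun N : ℝ => Real.log D / Real.log N + 1 +
      2 * (Real.log (Real.log N) / Real.log N)) atTop (nhds 1) := by
    have hs := (h1.add hone).add (h2.const_mul 2)
    norm_num at hs
    exact hs
  apply hLL.congr'
  filter_upwards [eventually_ge_atTop (2:ℝ), A.eventually_ge_atTop 1] with N hN2 hLn1
  have hN0 : 0 < N := by linarith
  have hLn0 : 0 < Real.log N := by linarith
  have hexp : lapL D N = Real.log D + Real.log N + 2 * Real.log (Real.log N) := by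
    rw [lapL, Real.log_mul hD.ne' (by positivity),
      Real.log_mul (by positivity) (by positivity), Real.log_pow]
    push_cast; ring
  rw [hexp]
  field_simp

lemma lap_M_div_log (D : ℝ) (hD : 0 < D) :
    Tendsto (fun N => lapM D N / Real.log N) atTop (nhds 1) := by
  have A := Real.tendsto_log_atTop
  have hlog : Tendsto (fun x : ℝ => Real.log x / x) atTop (nhds 0) :=
    Real.isLittleO_log_id_atTop.tendsto_div_nhds_zero
  have h1 : Tendsto (fun N : ℝ => Real.log D / Real.log N) atTop (nhds 0) :=
    tendsto_const_nhds.div_atTop A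
  have h2 : Tendsto (fun N : ℝ => Real.log (Real.log N) / Real.log N) atTop (nhds 0) :=
    hlog.comp A
  have hone : Tendsto (fun _ : ℝ => (1:ℝ)) atTop (nhds 1) := tendsto_const_nhds
  have hLL : Tendsto (fun N : ℝ => Real.log D / Real.log N + 1 -
      2 * (Real.log (Real.log N) / Real.log N)) atTop (nhds 1) := by
    have hs := (h1.add hone).sub (h2.const_mul 2)
    norm_num at hs
    exact hs
  apply hLL.congr'
  filter_upwards [eventually_ge_atTop (2:ℝ), A.eventually_ge_atTop 1] with N hN2 hLn1
  have hN0 : 0 < N := by linarith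
  have hLn0 : 0 < Real.log N := by linarith
  have hexp : lapM D N = Real.log D + Real.log N - 2 * Real.log (Real.log N) := by
    rw [lapM, Real.log_div (by positivity) (by positivity),
      Real.log_mul hD.ne' (by positivity), Real.log_pow]
    push_cast; ring
  rw [hexp]
  field_simp

lemma inv_tendsto_one {f : ℝ → ℝ} (h : Tendsto f atTop (nhds 1)) :
    Tendsto (fun N => (f N)⁻¹) atTop (nhds 1) := by
  have := h.inv₀ one_ne_zero
  rwa [inv_one] at this

lemma lapL_atTop (D : ℝ) (hD : 0 < D) : Tendsto (fun N => lapL D N) atTop atTop := by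
  have h2 : Tendsto (fun N : ℝ => Real.log N ^ 2) atTop atTop :=
    (tendsto_pow_atTop two_ne_zero).comp Real.tendsto_log_atTop
  have hmul : Tendsto (fun N : ℝ => N * Real.log N ^ 2) atTop atTop :=
    tendsto_id.atTop_mul_atTop₀ h2
  exact Real.tendsto_log_atTop.comp (hmul.const_mul_atTop hD)

lemma lap_lower_tendsto (E D t₁ : ℝ) (hE : 0 < E) (hD : 0 < D) (ht₁ : 0 < t₁) :
    Tendsto (fun N : ℝ => lapLower E D t₁ N) atTop (nhds 1) := by
  have A := Real.tendsto_log_atTop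
  have hLL := lap_L_div_log D hD
  have hquot : Tendsto (fun N : ℝ => Real.log N / lapL D N) atTop (nhds 1) := by
    apply (inv_tendsto_one hLL).congr
    intro N
    rw [inv_div]
  have hexp1 : Tendsto (fun N : ℝ => Real.exp (-(E * lapL D N / Real.log N ^ 2)))
      atTop (nhds 1) := by
    have harg : Tendsto (fun N : ℝ => E * lapL D N / Real.log N ^ 2) atTop (nhds 0) := by
      have h := (hLL.const_mul E).div_atTop A
      apply h.congr
      intro N
      ring
    have hn := harg.neg
    rw [neg_zero] at hn
    have h2 := (Real.continuous_exp.tendsto 0).comp hn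
    simpa [Real.exp_zero, Function.comp_def] using h2
  have hexp2 : Tendsto (fun N : ℝ => Real.exp (-(N * E * t₁ * lapL D N))) atTop (nhds 0) := by
    have h1 : Tendsto (fun N : ℝ => N * E * t₁) atTop atTop :=
      (tendsto_id.atTop_mul_const hE).atTop_mul_const ht₁
    exact Real.tendsto_exp_neg_atTop_nhds_zero.comp (h1.atTop_mul_atTop₀ (lapL_atTop D hD))
  have := hquot.mul (hexp1.sub hexp2)
  norm_num at this
  exact this

lemma lap_upper_tendsto (E D t₁ : ℝ) (hE : 0 < E) (hD : 0 < D) (ht₁ : 0 < t₁)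
    (ht₁D : t₁ < D / 3) :
    Tendsto (fun N : ℝ => lapUpper E D t₁ N) atTop (nhds 1) := by
  have A := Real.tendsto_log_atTop
  have hD3 : 3 * t₁ < D := by rw [lt_div_iff₀ (by norm_num : (0:ℝ) < 3)] at ht₁D; linarith
  have hl₁ : 1 < Real.log (D / t₁) := one_lt_log_of D t₁ ht₁ (by rw [le_div_iff₀ ht₁]; linarith)
  have hc0 : 0 < E * Real.log (D / t₁) := by nlinarith
  have t1 : Tendsto (fun N : ℝ => E / Real.log N) atTop (nhds 0) :=
    tendsto_const_nhds.div_atTop A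
  have t2 : Tendsto (fun N : ℝ => Real.log N / lapM D N) atTop (nhds 1) := by
    apply (inv_tendsto_one (lap_M_div_log D hD)).congr
    intro N
    rw [inv_div]
  have hub : Tendsto (fun N : ℝ => E * t₁ * Real.exp (-Real.log N)) atTop (nhds 0) := by
    have h := (Real.tendsto_exp_neg_atTop_nhds_zero.comp A).const_mul (E * t₁)
    rw [mul_zero] at h
    exact h
  have t3 : Tendsto (fun N : ℝ =>
      E * N * Real.log N * t₁ * Real.exp (-(E * Real.log N ^ 2 * Real.log (D / t₁))))
      atTop (nhds 0) := by
    apply tendsto_of_tendsto_of_tendsto_of_le_of_le' tendsto_const_nhds hub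
    · filter_upwards [eventually_ge_atTop (1:ℝ), A.eventually_ge_atTop 1] with N hN1 hLn1
      have : (0:ℝ) ≤ N := by linarith
      have : (0:ℝ) ≤ Real.log N := by linarith
      exact mul_nonneg (mul_nonneg (mul_nonneg (mul_nonneg hE.le (by linarith)) (by linarith))
        ht₁.le) (Real.exp_pos _).le
    · filter_upwards [eventually_ge_atTop (1:ℝ),
        A.eventually_ge_atTop (3 / (E * Real.log (D / t₁))), A.eventually_ge_atTop 1]
        with N hN1 hN3 hLn1
      have hN0 : 0 < N := lt_of_lt_of_le one_pos hN1
      have hexpL : N = Real.exp (Real.log N) := (Real.exp_log hN0).symm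
      have hLe : Real.log N ≤ Real.exp (Real.log N) := by
        linarith [Real.add_one_le_exp (Real.log N)]
      have h33 : 3 ≤ E * Real.log (D / t₁) * Real.log N := by
        rw [div_le_iff₀ hc0] at hN3
        nlinarith
      calc E * N * Real.log N * t₁ * Real.exp (-(E * Real.log N ^ 2 * Real.log (D / t₁)))
          = (E * t₁) * ((N * Real.log N) *
              Real.exp (-(E * Real.log N ^ 2 * Real.log (D / t₁)))) := by ring
        _ ≤ (E * t₁) * ((Real.exp (Real.log N) * Real.exp (Real.log N)) *
              Real.exp (-(E * Real.log N ^ 2 * Real.log (D / t₁)))) := by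
            apply mul_le_mul_of_nonneg_left _ (by positivity)
            apply mul_le_mul_of_nonneg_right _ (Real.exp_pos _).le
            exact mul_le_mul (le_of_eq hexpL) hLe (by linarith) (Real.exp_pos _).le
        _ = (E * t₁) * Real.exp (Real.log N + Real.log N +
              -(E * Real.log N ^ 2 * Real.log (D / t₁))) := by
            rw [← Real.exp_add, ← Real.exp_add]
        _ ≤ (E * t₁) * Real.exp (-Real.log N) := by
            apply mul_le_mul_of_nonneg_left _ (by positivity)
            apply Real.exp_le_exp.2
            have h4 : 3 * Real.log N ≤ (E * Real.log (D / t₁) * Real.log N) * Real.log N :=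
              mul_le_mul_of_nonneg_right h33 (by linarith)
            nlinarith
  have := (t1.add t2).add t3
  norm_num at this
  exact this

/-- For constants `E, D > 0` and `0 < t₁ < D/3`, the Laplace-type integral
`I_n = ∫_0^{t₁} exp(−n·E·t·ln(D/t)) dt` satisfies `I_n ~ 1/(E·n·ln n)` as `n → ∞`,
i.e. `E·n·ln(n)·I_n → 1`. -/
theorem laplace_integral_asymptotic (E D t₁ : ℝ) (hE : 0 < E) (hD : 0 < D)
    (ht₁ : 0 < t₁) (ht₁D : t₁ < D / 3) :
    Tendsto (fun n : ℕ =>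
        E * (n : ℝ) * Real.log n *
          ∫ t in (0 : ℝ)..t₁, Real.exp (-((n : ℝ) * E * t * Real.log (D / t))))
      atTop (nhds 1) := by
  have hcast : Tendsto (fun n : ℕ => (n : ℝ)) atTop atTop := tendsto_natCast_atTop_atTop
  have hlow := (lap_lower_tendsto E D t₁ hE hD ht₁).comp hcast
  have hup := (lap_upper_tendsto E D t₁ hE hD ht₁ ht₁D).comp hcast
  have hA : Tendsto (fun n : ℕ => Real.log n) atTop atTop :=
    Real.tendsto_log_atTop.comp hcast
  have hdd : Tendsto (fun n : ℕ => Real.log n ^ 2 / n) atTop (nhds 0) := by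
    have := (Real.tendsto_pow_log_div_mul_add_atTop 1 0 2 one_ne_zero).comp hcast
    simpa [Function.comp_def] using this
  apply tendsto_of_tendsto_of_tendsto_of_le_of_le' hlow hup
  · filter_upwards [hcast.eventually_ge_atTop 1, hA.eventually_ge_atTop 2,
      hdd.eventually_le_const ht₁] with n h1 h2 h3
    exact lap_lower_le E D t₁ n hE hD ht₁ ht₁D h1 h2 h3
  · filter_upwards [hcast.eventually_ge_atTop 1, hA.eventually_ge_atTop 2,
      hdd.eventually_le_const ht₁] with n h1 h2 h3
    exact lap_upper_le E D t₁ n hE hD ht₁ ht₁D h1 h2 h3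
end
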